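/- arXiv:1607.06069 — 3 statements merged into one kernel-verified Lean document; each statement's English description precedes it below -/
import Mathlib

section
/- Define ℐ_s(t) as the one-dimensional dyadic block kernel 2^{2−s} sin²(π2^{s−2}t)(2cos(π2^{s−1}t)+1)(cos(π2^{s−1}t)+cos(π2^s t)−1)/(π²t²). Then for every 1 ≤ p < ∞ there exist constants C₁, C₂ > 0 depending only on p such that for all s ≥ 1, C₁·2^{s(1−1/p)} ≤ (∫_ℝ |ℐ_s(t)|^p dt)^{1/p} ≤ C₂·2^{s(1−1/p)}. -/
/-- The one-dimensional dyadic block kernel `ℐ_s = K_s - K_{s-1}`, given by its explicit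
formula for `t ≠ 0` and extended continuously (by its limit value `3·2^{s-2}`) at `t = 0`. -/
noncomputable def blockKernel (s : ℕ) (t : ℝ) : ℝ :=
  if t = 0 then 3 * 2 ^ ((s : ℝ) - 2)
  else
    (2 : ℝ) ^ ((2 : ℝ) - (s : ℝ)) *
      (Real.sin (Real.pi * 2 ^ ((s : ℝ) - 2) * t)) ^ 2 *
      (2 * Real.cos (Real.pi * 2 ^ ((s : ℝ) - 1) * t) + 1) *
      (Real.cos (Real.pi * 2 ^ ((s : ℝ) - 1) * t) +
        Real.cos (Real.pi * 2 ^ (s : ℝ) * t) - 1) /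
      (Real.pi ^ 2 * t ^ 2)

lemma bk_scale (s : ℕ) (t : ℝ) :
    blockKernel s t = 2 ^ ((s : ℝ) - 2) * blockKernel 2 (2 ^ ((s : ℝ) - 2) * t) := by
  have h2 : (0:ℝ) < 2 ^ ((s : ℝ) - 2) := Real.rpow_pos_of_pos two_pos _
  unfold blockKernel
  by_cases ht : t = 0
  · simp [ht, mul_comm]
  · have h' : 2 ^ ((s : ℝ) - 2) * t ≠ 0 := mul_ne_zero h2.ne' ht
    rw [if_neg ht, if_neg h']
    rw [show ((2:ℕ) : ℝ) = (2:ℝ) by norm_num]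
    have ha0 : (2:ℝ) ^ ((2:ℝ) - 2) = 1 := by norm_num
    have ha1 : (2:ℝ) ^ ((2:ℝ) - 1) = 2 := by norm_num
    have ha2 : (2:ℝ) ^ ((2:ℝ)) = 4 := by
      rw [show ((2:ℝ)) = ((2:ℕ):ℝ) by norm_num, Real.rpow_natCast]; norm_num
    rw [ha0, ha1, ha2]
    have e0 : Real.pi * 1 * (2 ^ ((s : ℝ) - 2) * t) = Real.pi * 2 ^ ((s:ℝ) - 2) * t := by
      ring
    have e1 : Real.pi * 2 * (2 ^ ((s : ℝ) - 2) * t) = Real.pi * 2 ^ ((s:ℝ) - 1) * t := by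
      rw [show Real.pi * 2 * (2 ^ ((s : ℝ) - 2) * t)
        = Real.pi * ((2:ℝ)^(1:ℝ) * 2 ^ ((s : ℝ) - 2)) * t by rw [Real.rpow_one]; ring,
        ← Real.rpow_add two_pos]
      ring_nf
    have e2 : Real.pi * 4 * (2 ^ ((s : ℝ) - 2) * t) = Real.pi * 2 ^ ((s:ℝ)) * t := by
      rw [show Real.pi * 4 * (2 ^ ((s : ℝ) - 2) * t)
        = Real.pi * ((2:ℝ)^(2:ℝ) * 2 ^ ((s : ℝ) - 2)) * t by rw [ha2]; ring,
        ← Real.rpow_add two_pos]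
      ring_nf
    rw [e0, e1, e2]
    have key : (2:ℝ)^((2:ℝ)-(s:ℝ)) * ((2:ℝ)^((s:ℝ)-2))^2 = 2^((s:ℝ)-2) := by
      rw [← Real.rpow_natCast ((2:ℝ) ^ ((s:ℝ)-2)) 2, ← Real.rpow_mul (by norm_num : (0:ℝ) ≤ 2),
        ← Real.rpow_add two_pos]
      norm_num
      ring_nf
    rw [mul_pow]
    set S := Real.sin (Real.pi * 2 ^ ((s:ℝ) - 2) * t) ^ 2 with hS
    set A := 2 * Real.cos (Real.pi * 2 ^ ((s:ℝ) - 1) * t) + 1 with hA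
    set B := Real.cos (Real.pi * 2 ^ ((s:ℝ) - 1) * t) +
        Real.cos (Real.pi * 2 ^ (s:ℝ) * t) - 1 with hB
    set a := (2:ℝ) ^ ((s:ℝ) - 2) with ha
    set c := (2:ℝ) ^ ((2:ℝ) - (s:ℝ)) with hc
    have hpi : Real.pi ≠ 0 := Real.pi_ne_zero
    field_simp
    linear_combination (S * A * B) * (mul_left_cancel₀ h2.ne' (by linear_combination key) : c * a = 1)

lemma cast2 : (((2:ℕ)):ℝ) = (2:ℝ) := by norm_num

lemma c0 : (2:ℝ) ^ (((2:ℕ):ℝ) - 2) = 1 := by rw [cast2]; norm_num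

lemma c1 : (2:ℝ) ^ (((2:ℕ):ℝ) - 1) = 2 := by rw [cast2]; norm_num

lemma c2 : (2:ℝ) ^ (((2:ℕ):ℝ)) = 4 := by
  rw [Real.rpow_natCast]; norm_num

lemma c0' : (2:ℝ) ^ ((2:ℝ) - ((2:ℕ):ℝ)) = 1 := by rw [cast2]; norm_num

lemma bk_bound (u : ℝ) : |blockKernel 2 u| ≤ 18 / (1 + u ^ 2) := by
  have h1u : (0:ℝ) < 1 + u ^ 2 := by positivity
  have hpi : (3:ℝ) < Real.pi := Real.pi_gt_three
  unfold blockKernel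
  by_cases hu : u = 0
  · rw [if_pos hu, hu, c0]
    norm_num
  · rw [if_neg hu, c0, c1, c2, c0']
    have hu2 : (0:ℝ) < u ^ 2 := by positivity
    have hden : (0:ℝ) < Real.pi ^ 2 * u ^ 2 := by positivity
    set A := 2 * Real.cos (Real.pi * 2 * u) + 1 with hA
    set B := Real.cos (Real.pi * 2 * u) + Real.cos (Real.pi * 4 * u) - 1 with hB
    set S := Real.sin (Real.pi * 1 * u) ^ 2 with hS
    have hS0 : 0 ≤ S := sq_nonneg _
    have hS1 : S ≤ 1 := Real.sin_sq_le_one _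
    have hS2 : S ≤ Real.pi ^ 2 * u ^ 2 := by
      have := Real.sin_sq_le_sq (x := Real.pi * 1 * u)
      calc S ≤ (Real.pi * 1 * u) ^ 2 := this
        _ = Real.pi ^ 2 * u ^ 2 := by ring
    have hAabs : |A| ≤ 3 := by
      have := Real.neg_one_le_cos (Real.pi * 2 * u)
      have := Real.cos_le_one (Real.pi * 2 * u)
      rw [abs_le]; constructor <;> nlinarith
    have hBabs : |B| ≤ 3 := by
      have := Real.neg_one_le_cos (Real.pi * 2 * u)
      have := Real.cos_le_one (Real.pi * 2 * u)
      have := Real.neg_one_le_cos (Real.pi * 4 * u)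
      have := Real.cos_le_one (Real.pi * 4 * u)
      rw [abs_le]; constructor <;> nlinarith
    rw [abs_div, abs_of_pos hden]
    have hnum : |1 * S * A * B| ≤ 9 * S := by
      rw [abs_mul, abs_mul, abs_mul, abs_one, one_mul, abs_of_nonneg hS0]
      calc S * |A| * |B| ≤ S * 3 * 3 := by
            apply mul_le_mul (mul_le_mul le_rfl hAabs (abs_nonneg _) hS0) hBabs
              (abs_nonneg _) (by positivity)
        _ = 9 * S := by ring
    calc |1 * S * A * B| / (Real.pi ^ 2 * u ^ 2) ≤ (9 * S) / (Real.pi ^ 2 * u ^ 2) := by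
          gcongr
      _ ≤ 18 / (1 + u ^ 2) := by
          rw [div_le_div_iff₀ hden h1u]
          have hpi2 : (9:ℝ) ≤ Real.pi ^ 2 := by nlinarith
          nlinarith [mul_le_mul_of_nonneg_right hS1 hu2.le, hS2,
            mul_le_mul_of_nonneg_right hpi2 hu2.le]

open MeasureTheory

lemma bk_meas : Measurable (blockKernel 2) := by
  unfold blockKernel
  apply Measurable.ite
  · exact measurableSet_eq_fun measurable_id measurable_const
  · exact measurable_const
  · apply Measurable.div
    · exact (by fun_prop : Continuous fun t : ℝ =>
        (2 : ℝ) ^ ((2 : ℝ) - (((2:ℕ)) : ℝ)) *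
        (Real.sin (Real.pi * 2 ^ ((((2:ℕ)) : ℝ) - 2) * t)) ^ 2 *
        (2 * Real.cos (Real.pi * 2 ^ ((((2:ℕ)) : ℝ) - 1) * t) + 1) *
        (Real.cos (Real.pi * 2 ^ ((((2:ℕ)) : ℝ) - 1) * t) +
          Real.cos (Real.pi * 2 ^ (((2:ℕ)) : ℝ) * t) - 1)).measurable
    · exact (by fun_prop : Continuous fun t : ℝ => Real.pi ^ 2 * t ^ 2).measurable

lemma bk_int (p : ℝ) (hp : 1 ≤ p) : Integrable (fun u => |blockKernel 2 u| ^ p) := by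
  have hm : Measurable fun u => |blockKernel 2 u| ^ p :=
    (Real.continuous_rpow_const (le_trans zero_le_one hp)).measurable.comp bk_meas.abs
  apply Integrable.mono' (integrable_inv_one_add_sq.const_mul ((18:ℝ) ^ p))
    hm.aestronglyMeasurable
  filter_upwards with u
  rw [Real.norm_eq_abs, abs_of_nonneg (Real.rpow_nonneg (abs_nonneg _) _)]
  have h1u : (0:ℝ) < 1 + u ^ 2 := by positivity
  have h1 : |blockKernel 2 u| ^ p ≤ (18 / (1 + u ^ 2)) ^ p :=
    Real.rpow_le_rpow (abs_nonneg _) (bk_bound u) (le_trans zero_le_one hp)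
  rw [Real.div_rpow (by norm_num) h1u.le] at h1
  have h2 : (1 + u ^ 2) ^ (1:ℝ) ≤ (1 + u ^ 2) ^ p :=
    Real.rpow_le_rpow_of_exponent_le (by nlinarith) hp
  rw [Real.rpow_one] at h2
  calc |blockKernel 2 u| ^ p ≤ (18:ℝ) ^ p / (1 + u ^ 2) ^ p := h1
    _ ≤ (18:ℝ) ^ p / (1 + u ^ 2) := by
        gcongr
    _ = (18:ℝ) ^ p * (1 + u ^ 2)⁻¹ := by rw [div_eq_mul_inv]

lemma bk_quarter : blockKernel 2 (1/4 : ℝ) = -(16 / Real.pi ^ 2) := by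
  unfold blockKernel
  rw [if_neg (by norm_num), c0, c0', c1, c2]
  rw [show Real.pi * 1 * (1/4 : ℝ) = Real.pi / 4 by ring,
    show Real.pi * 2 * (1/4 : ℝ) = Real.pi / 2 by ring,
    show Real.pi * 4 * (1/4 : ℝ) = Real.pi by ring,
    Real.cos_pi_div_two, Real.cos_pi, Real.sin_pi_div_four]
  have hs : (Real.sqrt 2 / 2) ^ 2 = 1/2 := by
    rw [div_pow, Real.sq_sqrt (by norm_num : (0:ℝ) ≤ 2)]; norm_num
  rw [hs]
  have hpi : Real.pi ≠ 0 := Real.pi_ne_zero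
  field_simp
  ring

lemma bk_pos (p : ℝ) (hp : 1 ≤ p) : 0 < ∫ u, |blockKernel 2 u| ^ p := by
  have hp0 : (0:ℝ) < p := lt_of_lt_of_le one_pos hp
  set f := fun u : ℝ => |blockKernel 2 u| ^ p with hf
  have hnn : 0 ≤ f := fun u => Real.rpow_nonneg (abs_nonneg _) _
  rw [integral_pos_iff_support_of_nonneg hnn (bk_int p hp)]
  -- continuity of blockKernel 2 at 1/4
  have hne : ∀ᶠ t : ℝ in nhds (1/4 : ℝ), t ≠ 0 := eventually_ne_nhds (by norm_num)
  have hEq : blockKernel 2 =ᶠ[nhds (1/4 : ℝ)] fun t =>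
      (2 : ℝ) ^ ((2 : ℝ) - ((2:ℕ) : ℝ)) *
      (Real.sin (Real.pi * 2 ^ (((2:ℕ) : ℝ) - 2) * t)) ^ 2 *
      (2 * Real.cos (Real.pi * 2 ^ (((2:ℕ) : ℝ) - 1) * t) + 1) *
      (Real.cos (Real.pi * 2 ^ (((2:ℕ) : ℝ) - 1) * t) +
        Real.cos (Real.pi * 2 ^ ((2:ℕ) : ℝ) * t) - 1) /
      (Real.pi ^ 2 * t ^ 2) := by
    filter_upwards [hne] with t ht
    unfold blockKernel
    rw [if_neg ht]
  have hca : ContinuousAt (blockKernel 2) (1/4 : ℝ) := by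
    apply ContinuousAt.congr _ hEq.symm
    apply ContinuousAt.div
    · fun_prop
    · fun_prop
    · positivity
  have hcf : ContinuousAt f (1/4 : ℝ) :=
    (hca.abs).rpow_const (Or.inr hp0.le)
  have hfpos : 0 < f (1/4 : ℝ) := by
    apply Real.rpow_pos_of_pos
    rw [bk_quarter, abs_neg, abs_of_pos (by positivity)]
    positivity
  have hev : ∀ᶠ u in nhds (1/4 : ℝ), 0 < f u := hcf (lt_mem_nhds hfpos)
  rw [eventually_nhds_iff] at hev
  obtain ⟨U, hU, hUo, hUmem⟩ := hev
  calc (0 : ENNReal) < MeasureTheory.volume U := hUo.measure_pos _ ⟨_, hUmem⟩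
    _ ≤ MeasureTheory.volume (Function.support f) := by
        apply measure_mono
        intro x hx
        exact ne_of_gt (hU x hx)

theorem stmt_7 (p : ℝ) (hp : 1 ≤ p) :
    ∃ C₁ C₂ : ℝ, 0 < C₁ ∧ 0 < C₂ ∧ ∀ s : ℕ, 1 ≤ s →
      C₁ * (2 : ℝ) ^ ((s : ℝ) * (1 - 1 / p)) ≤
        (∫ t : ℝ, |blockKernel s t| ^ p) ^ (1 / p) ∧
      (∫ t : ℝ, |blockKernel s t| ^ p) ^ (1 / p) ≤
        C₂ * (2 : ℝ) ^ ((s : ℝ) * (1 - 1 / p)) := by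
  have hp0 : (0:ℝ) < p := lt_of_lt_of_le one_pos hp
  set I := ∫ u : ℝ, |blockKernel 2 u| ^ p with hI
  have hI0 : 0 < I := bk_pos p hp
  set C := (2:ℝ) ^ ((-2:ℝ) * (1 - 1/p)) * I ^ (1/p) with hC
  have hC0 : 0 < C := mul_pos (Real.rpow_pos_of_pos two_pos _) (Real.rpow_pos_of_pos hI0 _)
  refine ⟨C, C, hC0, hC0, fun s _ => ?_⟩
  have ha : (0:ℝ) < 2 ^ ((s:ℝ) - 2) := Real.rpow_pos_of_pos two_pos _
  have step1 : (∫ t : ℝ, |blockKernel s t| ^ p)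
      = (2:ℝ) ^ (((s:ℝ) - 2) * (p - 1)) * I := by
    calc ∫ t : ℝ, |blockKernel s t| ^ p
        = ∫ t : ℝ, (2:ℝ) ^ (((s:ℝ) - 2) * p) *
            |blockKernel 2 (2 ^ ((s:ℝ) - 2) * t)| ^ p := by
          congr 1; funext t
          rw [bk_scale, abs_mul, abs_of_pos ha, Real.mul_rpow ha.le (abs_nonneg _),
            ← Real.rpow_mul (by norm_num : (0:ℝ) ≤ 2)]
      _ = (2:ℝ) ^ (((s:ℝ) - 2) * p) *
            ∫ t : ℝ, |blockKernel 2 (2 ^ ((s:ℝ) - 2) * t)| ^ p := by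
          rw [integral_const_mul]
      _ = (2:ℝ) ^ (((s:ℝ) - 2) * p) * (|(2 ^ ((s:ℝ) - 2) : ℝ)⁻¹| • I) := by
          rw [Measure.integral_comp_mul_left (fun u => |blockKernel 2 u| ^ p) (2 ^ ((s:ℝ) - 2))]
      _ = (2:ℝ) ^ (((s:ℝ) - 2) * p) * ((2:ℝ) ^ (-((s:ℝ) - 2)) * I) := by
          rw [abs_of_pos (inv_pos.2 ha), Real.rpow_neg (by norm_num : (0:ℝ) ≤ 2),
            smul_eq_mul]
      _ = (2:ℝ) ^ (((s:ℝ) - 2) * p) * (2:ℝ) ^ (-((s:ℝ) - 2)) * I := by ring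
      _ = (2:ℝ) ^ (((s:ℝ) - 2) * (p - 1)) * I := by
          rw [← Real.rpow_add two_pos]; ring_nf
  have key : (∫ t : ℝ, |blockKernel s t| ^ p) ^ (1/p)
      = C * 2 ^ ((s:ℝ) * (1 - 1/p)) := by
    rw [step1, Real.mul_rpow (Real.rpow_nonneg (by norm_num) _) hI0.le,
      ← Real.rpow_mul (by norm_num : (0:ℝ) ≤ 2)]
    have hexp : (((s:ℝ) - 2) * (p - 1)) * (1/p)
        = (-2:ℝ) * (1 - 1/p) + (s:ℝ) * (1 - 1/p) := by
      field_simp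
      ring
    rw [hexp, Real.rpow_add two_pos, hC]
    ring
  rw [key]
  constructor <;> apply le_of_eq <;> ring
end

section
/- Let d ≥ 1, r₁ > 1, 1 ≤ θ < ∞, and suppose for each s ∈ ℤ₊^d a nonnegative real a_s is given with (Σ_{s≥0} 2^{(s,r)θ} a_s^θ)^{1/θ} ≤ 1, where r = (r₁,…,r_d) with r₁ = ⋯ = r_ν < r_{ν+1} ≤ ⋯ ≤ r_d and γ_j = r_j/r₁. Then Σ_{(s,γ)>n} 2^{‖s‖₁} a_s ≤ C·2^{−n(r₁−1)}·n^{(ν−1)(1−1/θ)} for a constant C independent of n and of the sequence (a_s). -/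
open scoped BigOperators ENNReal
open Real

lemma aux_poly (p : ℕ) (c : ℝ) (hc : 0 < c) :
    ∃ K : ℝ, 0 < K ∧ ∀ a : ℝ, 0 ≤ a → (a + 1) ^ p ≤ K * (2 : ℝ) ^ (c * a) := by
  have hlog : (0:ℝ) < Real.log 2 := Real.log_pos one_lt_two
  set lam : ℝ := c * Real.log 2 / (p + 1) with hlam
  have hlampos : 0 < lam := by positivity
  set M : ℝ := max 1 (1/lam) with hM
  have hM1 : 1 ≤ M := le_max_left _ _
  have hMlam : 1 ≤ M * lam := by
    have : (1/lam) * lam ≤ M * lam :=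
      mul_le_mul_of_nonneg_right (le_max_right _ _) hlampos.le
    rwa [one_div, inv_mul_cancel₀ hlampos.ne'] at this
  refine ⟨M ^ p, by positivity, fun a ha => ?_⟩
  have h1 : a + 1 ≤ M * Real.exp (lam * a) := by
    have he : lam * a + 1 ≤ Real.exp (lam * a) := Real.add_one_le_exp _
    have h0 : a + 1 ≤ M * (lam * a + 1) := by nlinarith
    exact h0.trans (mul_le_mul_of_nonneg_left he (by linarith))
  have h2 : (a+1) ^ p ≤ (M * Real.exp (lam * a)) ^ p :=
    pow_le_pow_left₀ (by linarith) h1 p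
  have h3 : (M * Real.exp (lam * a)) ^ p = M ^ p * Real.exp (lam * a * p) := by
    rw [mul_pow, ← Real.exp_nat_mul]; ring_nf
  have h4 : Real.exp (lam * a * p) ≤ Real.exp (c * a * Real.log 2) := by
    apply Real.exp_le_exp.2
    have hle : lam * (p:ℝ) ≤ c * Real.log 2 := by
      rw [hlam, div_mul_eq_mul_div, div_le_iff₀ (by positivity)]
      have : (p:ℝ) ≤ p + 1 := by linarith
      nlinarith
    nlinarith
  have h5 : Real.exp (c * a * Real.log 2) = (2:ℝ) ^ (c * a) := by
    rw [Real.rpow_def_of_pos two_pos]; ring_nf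
  calc (a+1)^p ≤ (M * Real.exp (lam*a))^p := h2
    _ = M ^ p * Real.exp (lam * a * p) := h3
    _ ≤ M ^ p * (2:ℝ) ^ (c * a) := by
        rw [← h5]; exact mul_le_mul_of_nonneg_left h4 (by positivity)

noncomputable def Cgeo (c : ℝ) : ℝ≥0∞ := ∑' t : ℕ, ENNReal.ofReal ((2:ℝ) ^ (-c * (t:ℝ)))

lemma Cgeo_eq (c : ℝ) :
    Cgeo c = (1 - ENNReal.ofReal ((2:ℝ)^(-c)))⁻¹ := by
  rw [Cgeo, ← ENNReal.tsum_geometric]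
  apply tsum_congr
  intro t
  rw [← ENNReal.ofReal_pow (by positivity), ← Real.rpow_natCast ((2:ℝ)^(-c)) t,
    ← Real.rpow_mul (by norm_num)]

lemma Cgeo_lt_top (c : ℝ) (hc : 0 < c) : Cgeo c < ⊤ := by
  rw [Cgeo_eq]
  apply ENNReal.inv_lt_top.2
  rw [tsub_pos_iff_lt]
  calc ENNReal.ofReal ((2:ℝ)^(-c)) < ENNReal.ofReal 1 := by
        apply (ENNReal.ofReal_lt_ofReal_iff one_pos).2
        exact Real.rpow_lt_one_of_one_lt_of_neg one_lt_two (by linarith)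
    _ = 1 := ENNReal.ofReal_one

lemma aux_shift (c : ℝ) (hc : 0 < c) (x : ℝ) :
    (∑' k : ℕ, if x < (k:ℝ) then ENNReal.ofReal ((2:ℝ) ^ (-c * ((k:ℝ) - x))) else 0)
      ≤ Cgeo c := by
  classical
  set φ : ℕ → ℝ≥0∞ := fun k => if x < (k:ℝ) then ENNReal.ofReal ((2:ℝ) ^ (-c * ((k:ℝ) - x))) else 0 with hφ
  set m : ℕ := ⌈x⌉₊ with hm
  have hshift : ∑' k, φ k = ∑' t : ℕ, φ (t + m) := by
    apply tsum_eq_tsum_of_ne_zero_bij (fun t => (t.1 : ℕ) + m)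
    · intro s t h
      exact Subtype.ext (by simpa using h)
    · intro k hk
      have hx : x < (k:ℝ) := by
        by_contra hcon
        exact hk (by simp [hφ, hcon])
      have hmk : m ≤ k := Nat.ceil_le.2 hx.le
      refine ⟨⟨k - m, ?_⟩, Nat.sub_add_cancel hmk⟩
      simpa [Nat.sub_add_cancel hmk] using hk
    · intro t; rfl
  rw [hshift]
  apply ENNReal.tsum_le_tsum
  intro t
  by_cases h : x < ((t + m : ℕ) : ℝ)
  · simp only [hφ, if_pos h]
    apply ENNReal.ofReal_le_ofReal
    apply (Real.rpow_le_rpow_left_iff (by norm_num : (1:ℝ) < 2)).2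
    have hxm : x ≤ (m:ℝ) := Nat.le_ceil x
    push_cast
    nlinarith
  · simp only [hφ, if_neg h]
    exact zero_le

lemma aux_pi (q : ℝ≥0∞) (hq : q < 1) : ∀ m : ℕ, (∑' v : Fin m → ℕ, q ^ (∑ j, v j)) < ⊤ := by
  intro m
  induction m with
  | zero =>
    have : (∑' v : Fin 0 → ℕ, q ^ (∑ j, v j)) = q ^ (∑ j : Fin 0, (0:ℕ)) := by
      apply tsum_eq_single (fun _ => 0 : Fin 0 → ℕ)
      intro b hb
      exact absurd (Subsingleton.elim b _) hb
    rw [this]; simp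
  | succ m ih =>
    have he : (∑' v : Fin (m+1) → ℕ, q ^ (∑ j, v j))
        = ∑' p : ℕ × (Fin m → ℕ), q ^ (p.1 + ∑ j, p.2 j) := by
      rw [← Equiv.tsum_eq (Fin.consEquiv (fun _ : Fin (m+1) => ℕ)) (fun v => q ^ (∑ j, v j))]
      apply tsum_congr
      intro p
      congr 1
      simp [Fin.consEquiv, Fin.sum_univ_succ]
    rw [he]
    have : (∑' p : ℕ × (Fin m → ℕ), q ^ (p.1 + ∑ j, p.2 j))
        = (∑' v : Fin m → ℕ, q ^ (∑ j, v j)) * ∑' a : ℕ, q ^ a := by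
      rw [ENNReal.tsum_prod']
      calc ∑' (a : ℕ) (v : Fin m → ℕ), q ^ (a + ∑ j, v j)
          = ∑' (a : ℕ), q ^ a * ∑' v : Fin m → ℕ, q ^ (∑ j, v j) := by
            apply tsum_congr; intro a
            rw [← ENNReal.tsum_mul_left]
            apply tsum_congr; intro v
            rw [pow_add]
        _ = (∑' v : Fin m → ℕ, q ^ (∑ j, v j)) * ∑' a : ℕ, q ^ a := by
            rw [ENNReal.tsum_mul_right]; ring
    rw [this, ENNReal.tsum_geometric]
    apply ENNReal.mul_lt_top ih
    apply ENNReal.inv_lt_top.2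
    rwa [tsub_pos_iff_lt]

-- fiber count lemma
lemma fiber_count (d ν : ℕ) (hν : 1 ≤ ν) (hνd : ν ≤ d)
    (p : ℕ × (Fin d → ℕ)) (x : ℝ≥0∞) :
    (∑' _ : {s : Fin d → ℕ //
        (∑ j ∈ Finset.univ.filter (fun j : Fin d => (j:ℕ) < ν), s j,
          fun j : Fin d => if (j:ℕ) < ν then 0 else s j) = p}, x)
      ≤ ((p.1 + 1) ^ (ν - 1) : ℕ) * x := by
  classical
  set Small := Finset.univ.filter (fun j : Fin d => (j:ℕ) < ν) with hSmall
  set Fib := {s : Fin d → ℕ //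
      (∑ j ∈ Small, s j, fun j : Fin d => if (j:ℕ) < ν then 0 else s j) = p} with hFib
  have hkey : ∀ (a : Fib) (i : ℕ) (hi : i < d), i < ν → a.1 ⟨i, hi⟩ ≤ p.1 := by
    rintro ⟨s, hs⟩ i hi hiν
    have h1 : (∑ j ∈ Small, s j) = p.1 := congrArg Prod.fst hs
    rw [← h1]
    apply Finset.single_le_sum (f := fun j => s j) (fun _ _ => Nat.zero_le _)
    simp [hSmall, hiν]
  set ι : Fib → (Fin (ν-1) → Fin (p.1+1)) := fun a i =>
    ⟨a.1 ⟨i.1, by have := i.2; omega⟩,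
      Nat.lt_succ_of_le (hkey a i.1 (by have := i.2; omega) (by have := i.2; omega))⟩ with hι
  have hinj : Function.Injective ι := by
    rintro ⟨s, hs⟩ ⟨t, ht⟩ h
    have hs1 : (∑ j ∈ Small, s j) = p.1 := congrArg Prod.fst hs
    have ht1 : (∑ j ∈ Small, t j) = p.1 := congrArg Prod.fst ht
    have hs2 := congrArg Prod.snd hs
    have ht2 := congrArg Prod.snd ht
    simp only at hs2 ht2
    have hlow : ∀ j : Fin d, (j:ℕ) < ν - 1 → s j = t j := by
      intro j hj
      have := congrFun h ⟨j.1, hj⟩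
      have := congrArg Fin.val this
      simpa [hι] using this
    have hhigh : ∀ j : Fin d, ν ≤ (j:ℕ) → s j = t j := by
      intro j hj
      have h1 := congrFun hs2 j
      have h2 := congrFun ht2 j
      simp only [if_neg (by omega : ¬ (j:ℕ) < ν)] at h1 h2
      rw [h1, h2]
    apply Subtype.ext
    funext j
    by_cases hj1 : (j:ℕ) < ν - 1
    · exact hlow j hj1
    by_cases hj2 : ν ≤ (j:ℕ)
    · exact hhigh j hj2
    -- j = ν - 1
    have hjν : (j:ℕ) = ν - 1 := by omega
    have hjSmall : j ∈ Small := by simp [hSmall]; omega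
    have es : s j + ∑ x ∈ Small.erase j, s x = ∑ x ∈ Small, s x :=
      Finset.add_sum_erase _ _ hjSmall
    have et : t j + ∑ x ∈ Small.erase j, t x = ∑ x ∈ Small, t x :=
      Finset.add_sum_erase _ _ hjSmall
    have herase : ∑ x ∈ Small.erase j, s x = ∑ x ∈ Small.erase j, t x := by
      apply Finset.sum_congr rfl
      intro i hi
      rcases Finset.mem_erase.mp hi with ⟨hne, hiS⟩
      have hiν : (i:ℕ) < ν := by
        have := (Finset.mem_filter.mp hiS).2
        exact this
      have : (i:ℕ) ≠ ν - 1 := by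
        intro hc
        exact hne (Fin.ext (by omega))
      exact hlow i (by omega)
    show s j = t j
    omega
  calc (∑' _ : Fib, x) = ∑' a : Fib, (fun _ : Fin (ν-1) → Fin (p.1+1) => x) (ι a) := by rfl
    _ ≤ ∑' _ : Fin (ν-1) → Fin (p.1+1), x :=
        ENNReal.tsum_comp_le_tsum_of_injective hinj _
    _ = ((p.1 + 1) ^ (ν - 1) : ℕ) * x := by
        rw [tsum_fintype, Finset.sum_const, Finset.card_univ, Fintype.card_fun]
        simp [nsmul_eq_mul, Fintype.card_fin]

set_option maxHeartbeats 2000000 in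
lemma lemB (d ν : ℕ) (hν : 1 ≤ ν) (hνd : ν ≤ d)
    (r : Fin d → ℝ) (r₁ : ℝ) (hr₁ : 1 < r₁)
    (hsmall : ∀ j : Fin d, (j:ℕ) < ν → r j = r₁)
    (hbig : ∀ j : Fin d, ν ≤ (j:ℕ) → r₁ < r j)
    (hmono : Monotone r)
    (β : ℝ) (hβ : 0 < β) :
    ∃ CB : ℝ, 0 < CB ∧ ∀ n : ℕ, 1 ≤ n →
      (∑' s : {s : Fin d → ℕ // (n:ℝ) < ∑ j, (s j:ℝ) * (r j / r₁)},
          ENNReal.ofReal ((2:ℝ) ^ (-β * ∑ j, (s.1 j:ℝ) * (r j - 1))))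
        ≤ ENNReal.ofReal (CB * (2:ℝ) ^ (-(β * (r₁ - 1)) * (n:ℝ)) * (n:ℝ) ^ (ν - 1 : ℕ)) := by
  classical
  have hr₁0 : (0:ℝ) < r₁ := by linarith
  set γ : Fin d → ℝ := fun j => r j / r₁ with hγ
  have hγ1 : ∀ j : Fin d, (j:ℕ) < ν → γ j = 1 := by
    intro j hj
    simp only [hγ, hsmall j hj]
    exact div_self (ne_of_gt hr₁0)
  have hγge1 : ∀ j, 1 ≤ γ j := by
    intro j
    rcases lt_or_ge (j:ℕ) ν with h | h
    · rw [hγ1 j h]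
    · exact le_of_lt ((one_lt_div hr₁0).2 (hbig j h))
  have hγmono : Monotone γ := by
    intro i j hij
    show r i / r₁ ≤ r j / r₁
    gcongr
    exact hmono hij
  set δ : ℝ := β * (r₁ - 1) with hδdef
  have hδ : 0 < δ := mul_pos hβ (by linarith)
  set κ₀ : ℝ := if h : ν < d then β * (γ ⟨ν, h⟩ - 1) else 1 with hκ₀def
  have hκ₀ : 0 < κ₀ := by
    rw [hκ₀def]
    split_ifs with h
    · have : (1:ℝ) < γ ⟨ν, h⟩ := (one_lt_div hr₁0).2 (hbig ⟨ν, h⟩ (le_refl ν))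
      have := sub_pos.2 this
      positivity
    · norm_num
  have hκ₀le : ∀ j : Fin d, ν ≤ (j:ℕ) → κ₀ ≤ β * (γ j - 1) := by
    intro j hj
    have hνd' : ν < d := lt_of_le_of_lt hj j.2
    rw [hκ₀def, dif_pos hνd']
    have : γ ⟨ν, hνd'⟩ ≤ γ j := hγmono (by exact hj)
    nlinarith
  set ρ : ℝ := (2:ℝ) ^ (-κ₀) with hρdef
  have hρpos : 0 < ρ := Real.rpow_pos_of_pos two_pos _
  have hρlt1 : ρ < 1 := Real.rpow_lt_one_of_one_lt_of_neg one_lt_two (by linarith)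
  obtain ⟨K, hK, hKp⟩ := aux_poly (ν - 1) (δ/2) (by positivity)
  set ρ' : ℝ≥0∞ := ENNReal.ofReal ρ with hρ'def
  have hρ'lt1 : ρ' < 1 := by
    rw [hρ'def]
    exact ENNReal.ofReal_lt_one.2 hρlt1
  set PiC : ℝ≥0∞ := ∑' v : Fin d → ℕ, ρ' ^ (∑ j, v j) with hPiCdef
  have hPiC : PiC < ⊤ := aux_pi ρ' hρ'lt1 d
  set CBtop : ℝ≥0∞ := ENNReal.ofReal K * Cgeo (δ/2) * PiC with hCBtopdef
  have hCBtop : CBtop < ⊤ :=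
    ENNReal.mul_lt_top (ENNReal.mul_lt_top ENNReal.ofReal_lt_top (Cgeo_lt_top _ (by positivity))) hPiC
  refine ⟨CBtop.toReal * 2 ^ (ν - 1 : ℕ) + 1, by positivity, ?_⟩
  intro n hn
  -- definitions
  set cf : (Fin d → ℕ) → ℝ := fun v => ∑ j, (v j:ℝ) * γ j with hcf
  have hcf0 : ∀ v, 0 ≤ cf v := by
    intro v
    apply Finset.sum_nonneg
    intro j _
    have := hγge1 j
    positivity
  set PS : Set (Fin d → ℕ) := {s | (n:ℝ) < cf s} with hPS
  set f : (Fin d → ℕ) → ℝ≥0∞ :=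
    fun s => ENNReal.ofReal ((2:ℝ) ^ (-β * ∑ j, (s j:ℝ) * (r j - 1))) with hfdef
  set Small := Finset.univ.filter (fun j : Fin d => (j:ℕ) < ν) with hSmall
  set g : (Fin d → ℕ) → ℕ × (Fin d → ℕ) :=
    fun s => (∑ j ∈ Small, s j, fun j => if (j:ℕ) < ν then 0 else s j) with hgdef
  -- splitting lemmas
  have hsplit0 : ∀ (s : Fin d → ℕ) (w : Fin d → ℝ), (∀ j : Fin d, (j:ℕ) < ν → w j = w j) →
      True := fun _ _ _ => trivial
  have hsplit1 : ∀ s : Fin d → ℕ, cf s = ((g s).1 : ℝ) + cf ((g s).2) := by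
    intro s
    have h1 : cf s = (∑ j ∈ Small, (s j:ℝ) * γ j)
        + ∑ j ∈ Finset.univ.filter (fun j : Fin d => ¬ (j:ℕ) < ν), (s j:ℝ) * γ j := by
      simp only [hcf]
      exact (Finset.sum_filter_add_sum_filter_not Finset.univ _ _).symm
    have h2 : (∑ j ∈ Small, (s j:ℝ) * γ j) = ((∑ j ∈ Small, s j : ℕ) : ℝ) := by
      push_cast
      apply Finset.sum_congr rfl
      intro j hj
      rw [hγ1 j (Finset.mem_filter.mp hj).2, mul_one]
    have h3 : cf ((g s).2) = (∑ j ∈ Small, ((0:ℕ):ℝ) * γ j)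
        + ∑ j ∈ Finset.univ.filter (fun j : Fin d => ¬ (j:ℕ) < ν), (s j:ℝ) * γ j := by
      simp only [hcf]
      rw [← Finset.sum_filter_add_sum_filter_not Finset.univ (fun j : Fin d => (j:ℕ) < ν)]
      congr 1
      · apply Finset.sum_congr rfl
        intro j hj
        have hj' := (Finset.mem_filter.mp hj).2
        simp [hgdef, hj']
      · apply Finset.sum_congr rfl
        intro j hj
        have hj' := (Finset.mem_filter.mp hj).2
        simp [hgdef, hj']
    rw [h1, h2, h3]
    simp [hgdef]
  have hsplit2 : ∀ s : Fin d → ℕ,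
      (∑ j, (s j:ℝ) * (r j - 1)) = (r₁ - 1) * ((g s).1 : ℝ)
        + ∑ j, (((g s).2 j : ℕ):ℝ) * (r j - 1) := by
    intro s
    have h1 : (∑ j, (s j:ℝ) * (r j - 1)) = (∑ j ∈ Small, (s j:ℝ) * (r j - 1))
        + ∑ j ∈ Finset.univ.filter (fun j : Fin d => ¬ (j:ℕ) < ν), (s j:ℝ) * (r j - 1) :=
      (Finset.sum_filter_add_sum_filter_not Finset.univ _ _).symm
    have h2 : (∑ j ∈ Small, (s j:ℝ) * (r j - 1)) = (r₁ - 1) * ((∑ j ∈ Small, s j : ℕ) : ℝ) := by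
      push_cast
      rw [Finset.mul_sum]
      apply Finset.sum_congr rfl
      intro j hj
      rw [hsmall j (Finset.mem_filter.mp hj).2]
      ring
    have h3 : (∑ j, (((g s).2 j : ℕ):ℝ) * (r j - 1)) = (∑ j ∈ Small, ((0:ℕ):ℝ) * (r j - 1))
        + ∑ j ∈ Finset.univ.filter (fun j : Fin d => ¬ (j:ℕ) < ν), (s j:ℝ) * (r j - 1) := by
      rw [← Finset.sum_filter_add_sum_filter_not Finset.univ (fun j : Fin d => (j:ℕ) < ν)]
      congr 1
      · apply Finset.sum_congr rfl
        intro j hj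
        have hj' := (Finset.mem_filter.mp hj).2
        simp [hgdef, hj']
      · apply Finset.sum_congr rfl
        intro j hj
        have hj' := (Finset.mem_filter.mp hj).2
        simp [hgdef, hj']
    rw [h1, h2, h3]
    simp [hgdef]
  -- target function T
  set ψ : ℕ × (Fin d → ℕ) → ℝ≥0∞ := fun p =>
    if (n:ℝ) - cf p.2 < (p.1:ℝ) then
      ENNReal.ofReal ((2:ℝ) ^ (-(δ/2) * ((p.1:ℝ) - ((n:ℝ) - cf p.2)))) else 0 with hψdef
  set Con : ℝ≥0∞ := ENNReal.ofReal (K * ((n:ℝ)+1) ^ (ν - 1 : ℕ) * (2:ℝ) ^ (-δ * (n:ℝ))) with hCon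
  set T : ℕ × (Fin d → ℕ) → ℝ≥0∞ := fun p =>
    (if ∀ j : Fin d, (j:ℕ) < ν → p.2 j = 0 then (1:ℝ≥0∞) else 0) *
      (ρ' ^ (∑ j, p.2 j) * (Con * ψ p)) with hTdef
  -- per fiber bound
  have hperp : ∀ p : ℕ × (Fin d → ℕ),
      (∑' a : {s : Fin d → ℕ // g s = p}, PS.indicator f a.1) ≤ T p := by
    rintro ⟨k, v⟩
    by_cases htail : ∀ j : Fin d, (j:ℕ) < ν → v j = 0
    · by_cases hcond : (n:ℝ) - cf v < (k:ℝ)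
      · -- main case
        have hval : ∀ a : {s : Fin d → ℕ // g s = (k, v)},
            PS.indicator f a.1
              = ENNReal.ofReal ((2:ℝ) ^ (-β * ((r₁ - 1) * (k:ℝ) + ∑ j, (v j:ℝ) * (r j - 1)))) := by
          rintro ⟨s, hs⟩
          have hk : (g s).1 = k := by rw [hs]
          have hv : (g s).2 = v := by rw [hs]
          have hcs : cf s = (k:ℝ) + cf v := by
            rw [hsplit1 s, hk, hv]
          have hmem : s ∈ PS := by
            rw [hPS]
            show (n:ℝ) < cf s
            rw [hcs]; linarith
          rw [Set.indicator_of_mem hmem]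
          simp only [hfdef]
          congr 2
          rw [hsplit2 s, hk, hv]
        rw [tsum_congr hval]
        refine le_trans (fiber_count d ν hν hνd (k, v) _) ?_
        -- now pure inequality in ℝ≥0∞
        have hite1 : (if ∀ j : Fin d, (j:ℕ) < ν → v j = 0 then (1:ℝ≥0∞) else 0) = 1 :=
          if_pos htail
        have hite2 : ψ (k, v)
            = ENNReal.ofReal ((2:ℝ) ^ (-(δ/2) * ((k:ℝ) - ((n:ℝ) - cf v)))) := by
          simp only [hψdef]
          rw [if_pos hcond]
        simp only [hTdef, hite1, hite2, one_mul, hCon]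
        -- convert everything to ofReal
        have hcast : (((k + 1) ^ (ν - 1) : ℕ) : ℝ≥0∞)
            = ENNReal.ofReal (((k:ℝ) + 1) ^ (ν - 1 : ℕ)) := by
          rw [← ENNReal.ofReal_natCast]
          congr 1
          push_cast
          ring
        rw [hcast, ← ENNReal.ofReal_mul (by positivity)]
        have hρpow : ρ' ^ (∑ j, v j) = ENNReal.ofReal (ρ ^ (∑ j, v j)) := by
          rw [hρ'def, ← ENNReal.ofReal_pow hρpos.le]
        rw [hρpow, ← ENNReal.ofReal_mul (by positivity), ← ENNReal.ofReal_mul (by positivity)]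
        apply ENNReal.ofReal_le_ofReal
        -- the real inequality
        set m : ℕ := ∑ j, v j with hm
        set a : ℝ := (k:ℝ) - ((n:ℝ) - cf v) with ha
        have ha0 : 0 < a := by rw [ha]; linarith
        set W : ℝ := β * ∑ j, (v j:ℝ) * (γ j - 1) with hW
        have hWm : κ₀ * (m:ℝ) ≤ W := by
          rw [hW, hm, Finset.mul_sum, Nat.cast_sum, Finset.mul_sum]
          apply Finset.sum_le_sum
          intro j _
          rcases lt_or_ge (j:ℕ) ν with hj | hj
          · rw [htail j hj]; simp
          · have h1 := hκ₀le j hj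
            have h2 : (0:ℝ) ≤ (v j:ℝ) := Nat.cast_nonneg _
            calc κ₀ * (v j:ℝ) ≤ (β * (γ j - 1)) * (v j:ℝ) := by nlinarith
              _ = (v j:ℝ) * (β * (γ j - 1)) := by ring
              _ = β * ((v j:ℝ) * (γ j - 1)) := by ring
        have hrj : ∀ j : Fin d, r j - 1 = (r₁ - 1) * γ j + (γ j - 1) := by
          intro j
          have : r₁ * γ j = r j := by
            show r₁ * (r j / r₁) = r j
            field_simp
          nlinarith
        have hsumv : (∑ j, (v j:ℝ) * (r j - 1))
            = (r₁ - 1) * cf v + ∑ j, (v j:ℝ) * (γ j - 1) := by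
          simp only [hcf, Finset.mul_sum, ← Finset.sum_add_distrib]
          apply Finset.sum_congr rfl
          intro j _
          rw [hrj j]
          ring
        have hexp : -β * ((r₁ - 1) * (k:ℝ) + ∑ j, (v j:ℝ) * (r j - 1))
            = (-(δ/2) * a) + ((-(δ/2) * a) + ((-δ * (n:ℝ)) + (-W))) := by
          rw [hsumv, hW, hδdef, ha]
          ring
        have hsplitpow : (2:ℝ) ^ (-β * ((r₁ - 1) * (k:ℝ) + ∑ j, (v j:ℝ) * (r j - 1)))
            = (2:ℝ) ^ (-(δ/2) * a) * ((2:ℝ) ^ (-(δ/2) * a)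
                * ((2:ℝ) ^ (-δ * (n:ℝ)) * (2:ℝ) ^ (-W))) := by
          rw [hexp, Real.rpow_add two_pos, Real.rpow_add two_pos, Real.rpow_add two_pos]
        have e2 : (2:ℝ) ^ (-W) ≤ ρ ^ m := by
          have h1 : (2:ℝ) ^ (-W) ≤ (2:ℝ) ^ (-(κ₀ * (m:ℝ))) := by
            apply (Real.rpow_le_rpow_left_iff one_lt_two).2
            linarith
          have h2 : ((2:ℝ) ^ (-κ₀ * (m:ℝ))) = ρ ^ m := by
            rw [hρdef, ← Real.rpow_natCast ((2:ℝ) ^ (-κ₀)) m, ← Real.rpow_mul (by norm_num)]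
          rw [← h2]
          convert h1 using 2
          ring
        have e3 : ((k:ℝ) + 1) ^ (ν - 1 : ℕ) ≤ (a + 1) ^ (ν - 1 : ℕ) * ((n:ℝ) + 1) ^ (ν - 1 : ℕ) := by
          rw [← mul_pow]
          apply pow_le_pow_left₀ (by positivity)
          have hcv := hcf0 v
          have hn' : (1:ℝ) ≤ (n:ℝ) := by exact_mod_cast hn
          nlinarith
        have e4 : (a + 1) ^ (ν - 1 : ℕ) * (2:ℝ) ^ (-(δ/2) * a) ≤ K := by
          have h1 := hKp a ha0.le
          have h2 : (0:ℝ) < (2:ℝ) ^ (-(δ/2) * a) := Real.rpow_pos_of_pos two_pos _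
          have h3 : (2:ℝ) ^ (δ/2 * a) * (2:ℝ) ^ (-(δ/2) * a) = 1 := by
            rw [← Real.rpow_add two_pos]
            norm_num
          calc (a + 1) ^ (ν - 1 : ℕ) * (2:ℝ) ^ (-(δ/2) * a)
              ≤ (K * (2:ℝ) ^ (δ/2 * a)) * (2:ℝ) ^ (-(δ/2) * a) := by
                apply mul_le_mul_of_nonneg_right h1 h2.le
            _ = K * ((2:ℝ) ^ (δ/2 * a) * (2:ℝ) ^ (-(δ/2) * a)) := by ring
            _ = K := by rw [h3]; ring
        -- combine
        have hx1 : (0:ℝ) < (2:ℝ) ^ (-(δ/2) * a) := Real.rpow_pos_of_pos two_pos _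
        have hx2 : (0:ℝ) < (2:ℝ) ^ (-δ * (n:ℝ)) := Real.rpow_pos_of_pos two_pos _
        have hx3 : (0:ℝ) < (2:ℝ) ^ (-W) := Real.rpow_pos_of_pos two_pos _
        have hnn : (0:ℝ) ≤ ((n:ℝ) + 1) ^ (ν - 1 : ℕ) := by positivity
        calc ((k:ℝ) + 1) ^ (ν - 1 : ℕ)
              * (2:ℝ) ^ (-β * ((r₁ - 1) * (k:ℝ) + ∑ j, (v j:ℝ) * (r j - 1)))
            = (((k:ℝ) + 1) ^ (ν - 1 : ℕ) * (2:ℝ) ^ (-(δ/2) * a))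
              * ((2:ℝ) ^ (-(δ/2) * a) * ((2:ℝ) ^ (-δ * (n:ℝ)) * (2:ℝ) ^ (-W))) := by
              rw [hsplitpow]; ring
          _ ≤ ((a + 1) ^ (ν - 1 : ℕ) * ((n:ℝ) + 1) ^ (ν - 1 : ℕ) * (2:ℝ) ^ (-(δ/2) * a))
              * ((2:ℝ) ^ (-(δ/2) * a) * ((2:ℝ) ^ (-δ * (n:ℝ)) * (2:ℝ) ^ (-W))) := by
              apply mul_le_mul_of_nonneg_right _ (by positivity)
              apply mul_le_mul_of_nonneg_right e3 hx1.le
          _ = ((a + 1) ^ (ν - 1 : ℕ) * (2:ℝ) ^ (-(δ/2) * a)) * ((n:ℝ) + 1) ^ (ν - 1 : ℕ)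
              * ((2:ℝ) ^ (-(δ/2) * a) * ((2:ℝ) ^ (-δ * (n:ℝ)) * (2:ℝ) ^ (-W))) := by ring
          _ ≤ K * ((n:ℝ) + 1) ^ (ν - 1 : ℕ)
              * ((2:ℝ) ^ (-(δ/2) * a) * ((2:ℝ) ^ (-δ * (n:ℝ)) * (2:ℝ) ^ (-W))) := by
              apply mul_le_mul_of_nonneg_right _ (by positivity)
              apply mul_le_mul_of_nonneg_right e4 hnn
          _ ≤ K * ((n:ℝ) + 1) ^ (ν - 1 : ℕ)
              * ((2:ℝ) ^ (-(δ/2) * a) * ((2:ℝ) ^ (-δ * (n:ℝ)) * ρ ^ m)) := by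
              apply mul_le_mul_of_nonneg_left _ (by positivity)
              apply mul_le_mul_of_nonneg_left _ hx1.le
              apply mul_le_mul_of_nonneg_left e2 hx2.le
          _ = ρ ^ m * (K * ((n:ℝ) + 1) ^ (ν - 1 : ℕ) * (2:ℝ) ^ (-δ * (n:ℝ))
              * (2:ℝ) ^ (-(δ/2) * ((k:ℝ) - ((n:ℝ) - cf v)))) := by
              rw [← ha]; ring
      · -- condition fails : indicator vanishes
        have hzero : ∀ a : {s : Fin d → ℕ // g s = (k, v)}, PS.indicator f a.1 = 0 := by
          rintro ⟨s, hs⟩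
          apply Set.indicator_of_notMem
          rw [hPS]
          show ¬ (n:ℝ) < cf s
          have hk : (g s).1 = k := by rw [hs]
          have hv : (g s).2 = v := by rw [hs]
          rw [hsplit1 s, hk, hv]
          push_neg at hcond ⊢
          linarith
        rw [tsum_congr hzero, tsum_zero]
        exact zero_le
    · -- fiber is empty
      have hempty : IsEmpty {s : Fin d → ℕ // g s = (k, v)} := by
        constructor
        rintro ⟨s, hs⟩
        apply htail
        intro j hj
        have hv : v j = (g s).2 j := by rw [hs]
        rw [hv]
        simp [hgdef, hj]
      rw [tsum_empty]
      exact zero_le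
  -- assembly
  have step1 : (∑' s : {s : Fin d → ℕ // (n:ℝ) < ∑ j, (s j:ℝ) * (r j / r₁)},
      ENNReal.ofReal ((2:ℝ) ^ (-β * ∑ j, (s.1 j:ℝ) * (r j - 1))))
      = ∑' s : Fin d → ℕ, PS.indicator f s := tsum_subtype PS f
  have step2 : (∑' s : Fin d → ℕ, PS.indicator f s) ≤ ∑' p : ℕ × (Fin d → ℕ), T p := by
    have hdecomp : (∑' s : Fin d → ℕ, PS.indicator f s)
        = ∑' p : ℕ × (Fin d → ℕ), ∑' a : {s : Fin d → ℕ // g s = p}, PS.indicator f a.1 := by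
      calc (∑' s : Fin d → ℕ, PS.indicator f s)
          = ∑' x : (Σ p : ℕ × (Fin d → ℕ), {s : Fin d → ℕ // g s = p}),
              PS.indicator f ((Equiv.sigmaFiberEquiv g) x) :=
            ((Equiv.sigmaFiberEquiv g).tsum_eq (PS.indicator f)).symm
        _ = ∑' p : ℕ × (Fin d → ℕ), ∑' a : {s : Fin d → ℕ // g s = p},
              PS.indicator f ((Equiv.sigmaFiberEquiv g) ⟨p, a⟩) :=
            ENNReal.tsum_sigma' _
        _ = ∑' p : ℕ × (Fin d → ℕ), ∑' a : {s : Fin d → ℕ // g s = p},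
              PS.indicator f a.1 := by
            apply tsum_congr; intro p
            apply tsum_congr; intro a
            congr 1
    rw [hdecomp]
    exact ENNReal.tsum_le_tsum hperp
  have hshift : ∀ vv : Fin d → ℕ, (∑' kk : ℕ, ψ (kk, vv)) ≤ Cgeo (δ/2) := by
    intro vv
    have h := aux_shift (δ/2) (by positivity) ((n:ℝ) - cf vv)
    refine le_trans (le_of_eq ?_) h
    apply tsum_congr
    intro kk
    simp only [hψdef]
  have step3 : (∑' p : ℕ × (Fin d → ℕ), T p) ≤ Con * Cgeo (δ/2) * PiC := by
    calc (∑' p : ℕ × (Fin d → ℕ), T p)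
        = ∑' (kk : ℕ), ∑' (vv : Fin d → ℕ), T (kk, vv) := ENNReal.tsum_prod'
      _ = ∑' (vv : Fin d → ℕ), ∑' (kk : ℕ), T (kk, vv) := ENNReal.tsum_comm
      _ ≤ ∑' (vv : Fin d → ℕ), ρ' ^ (∑ j, vv j) * (Con * Cgeo (δ/2)) := by
          apply ENNReal.tsum_le_tsum
          intro vv
          calc (∑' kk : ℕ, T (kk, vv))
              ≤ ∑' kk : ℕ, (ρ' ^ (∑ j, vv j) * (Con * ψ (kk, vv))) := by
                apply ENNReal.tsum_le_tsum
                intro kk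
                simp only [hTdef]
                split_ifs with h
                · rw [one_mul]
                · rw [zero_mul]; exact zero_le
            _ = ρ' ^ (∑ j, vv j) * (Con * ∑' kk : ℕ, ψ (kk, vv)) := by
                rw [ENNReal.tsum_mul_left, ENNReal.tsum_mul_left]
            _ ≤ ρ' ^ (∑ j, vv j) * (Con * Cgeo (δ/2)) := by
                apply mul_le_mul_right
                apply mul_le_mul_right
                exact hshift vv
      _ = (∑' vv : Fin d → ℕ, ρ' ^ (∑ j, vv j)) * (Con * Cgeo (δ/2)) := ENNReal.tsum_mul_right
      _ = Con * Cgeo (δ/2) * PiC := by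
          rw [hPiCdef]; ring
  refine le_trans (le_of_eq step1) (le_trans step2 (le_trans step3 ?_))
  -- final conversion
  have hConsplit : Con = ENNReal.ofReal K
      * ENNReal.ofReal (((n:ℝ)+1) ^ (ν - 1 : ℕ) * (2:ℝ) ^ (-δ * (n:ℝ))) := by
    rw [hCon, ← ENNReal.ofReal_mul hK.le, mul_assoc]
  have hCBtopfin : CBtop ≠ ⊤ := hCBtop.ne
  calc Con * Cgeo (δ/2) * PiC
      = CBtop * ENNReal.ofReal (((n:ℝ)+1) ^ (ν - 1 : ℕ) * (2:ℝ) ^ (-δ * (n:ℝ))) := by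
        rw [hConsplit, hCBtopdef]; ring
    _ = ENNReal.ofReal (CBtop.toReal * (((n:ℝ)+1) ^ (ν - 1 : ℕ) * (2:ℝ) ^ (-δ * (n:ℝ)))) := by
        rw [ENNReal.ofReal_mul ENNReal.toReal_nonneg, ENNReal.ofReal_toReal hCBtopfin]
    _ ≤ ENNReal.ofReal ((CBtop.toReal * 2 ^ (ν - 1 : ℕ) + 1)
          * (2:ℝ) ^ (-δ * (n:ℝ)) * (n:ℝ) ^ (ν - 1 : ℕ)) := by
        apply ENNReal.ofReal_le_ofReal
        have hn' : (1:ℝ) ≤ (n:ℝ) := by exact_mod_cast hn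
        have h1 : ((n:ℝ)+1) ^ (ν - 1 : ℕ) ≤ 2 ^ (ν - 1 : ℕ) * (n:ℝ) ^ (ν - 1 : ℕ) := by
          rw [← mul_pow]
          apply pow_le_pow_left₀ (by positivity)
          linarith
        have h2 : (0:ℝ) < (2:ℝ) ^ (-δ * (n:ℝ)) := Real.rpow_pos_of_pos two_pos _
        have h3 : (0:ℝ) ≤ CBtop.toReal := ENNReal.toReal_nonneg
        have h4 : (0:ℝ) ≤ (n:ℝ) ^ (ν - 1 : ℕ) := by positivity
        nlinarith [mul_le_mul_of_nonneg_left h1 h3,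
          mul_pos h2 (lt_of_lt_of_le one_pos (le_refl (1:ℝ)))]
set_option maxHeartbeats 1000000 in
theorem stmt_14 (d ν : ℕ) (hd : 1 ≤ d) (hν : 1 ≤ ν) (hνd : ν ≤ d)
    (r : Fin d → ℝ) (r₁ : ℝ) (hr₁ : 1 < r₁)
    (hsmall : ∀ j : Fin d, (j : ℕ) < ν → r j = r₁)
    (hbig : ∀ j : Fin d, ν ≤ (j : ℕ) → r₁ < r j)
    (hmono : Monotone r)
    (θ : ℝ) (hθ : 1 ≤ θ) :
    ∃ C : ℝ, 0 < C ∧ ∀ a : (Fin d → ℕ) → ℝ, (∀ s, 0 ≤ a s) →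
      (Summable fun s : Fin d → ℕ =>
        (2 : ℝ) ^ ((∑ j, (s j : ℝ) * r j) * θ) * a s ^ θ) →
      (∑' s : Fin d → ℕ,
        (2 : ℝ) ^ ((∑ j, (s j : ℝ) * r j) * θ) * a s ^ θ) ^ (1 / θ) ≤ 1 →
      ∀ n : ℕ, 1 ≤ n →
        (∑' s : {s : Fin d → ℕ // (n : ℝ) < ∑ j, (s j : ℝ) * (r j / r₁)},
          (2 : ℝ) ^ (∑ j, s.1 j) * a s.1) ≤
        C * (2 : ℝ) ^ (-(n : ℝ) * (r₁ - 1)) *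
          (n : ℝ) ^ (((ν : ℝ) - 1) * (1 - 1 / θ)) := by
  classical
  have hr₁0 : (0:ℝ) < r₁ := by linarith
  -- the key coefficient inequality
  have hkey : ∀ (s : Fin d → ℕ) (n : ℕ), (n:ℝ) < (∑ j, (s j : ℝ) * (r j / r₁)) →
      (n:ℝ) * (r₁ - 1) ≤ ∑ j, (s j : ℝ) * (r j - 1) := by
    intro s n hs
    have h1 : (r₁ - 1) * (∑ j, (s j : ℝ) * (r j / r₁)) ≤ ∑ j, (s j : ℝ) * (r j - 1) := by
      rw [Finset.mul_sum]
      apply Finset.sum_le_sum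
      intro j _
      have hγ1 : 1 ≤ r j / r₁ := (one_le_div hr₁0).2 (by
        rcases lt_or_ge (j:ℕ) ν with h | h
        · rw [hsmall j h]
        · exact (hbig j h).le)
      have hrj : r j - 1 = (r₁ - 1) * (r j / r₁) + (r j / r₁ - 1) := by
        field_simp
        ring
      have hs0 : (0:ℝ) ≤ (s j : ℝ) := Nat.cast_nonneg _
      rw [hrj]
      nlinarith
    have h2 : (r₁ - 1) * (n:ℝ) ≤ (r₁ - 1) * (∑ j, (s j : ℝ) * (r j / r₁)) := by
      apply mul_le_mul_of_nonneg_left hs.le (by linarith)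
    linarith [h1, h2]
  by_cases hθ1 : θ = 1
  · -- case θ = 1
    subst hθ1
    refine ⟨1, one_pos, ?_⟩
    intro a ha hsum hle n hn
    simp only [Real.rpow_one, mul_one] at hsum hle
    have hT1 : (∑' s : Fin d → ℕ, (2:ℝ) ^ (∑ j, (s j : ℝ) * r j) * a s) ≤ 1 := by
      have hTnn : 0 ≤ (∑' s : Fin d → ℕ, (2:ℝ) ^ (∑ j, (s j : ℝ) * r j) * a s) :=
        tsum_nonneg (fun s => by
          have := ha s
          positivity)
      calc (∑' s : Fin d → ℕ, (2:ℝ) ^ (∑ j, (s j : ℝ) * r j) * a s)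
          = ((∑' s : Fin d → ℕ, (2:ℝ) ^ (∑ j, (s j : ℝ) * r j) * a s) ^ (1/(1:ℝ))) := by
            norm_num
        _ ≤ 1 := hle
    have hRHS : (1:ℝ) * (2 : ℝ) ^ (-(n : ℝ) * (r₁ - 1)) *
        (n : ℝ) ^ (((ν : ℝ) - 1) * (1 - 1 / (1:ℝ)))
        = (2 : ℝ) ^ (-(n : ℝ) * (r₁ - 1)) := by
      norm_num
    rw [hRHS]
    by_cases hS : Summable (fun s : {s : Fin d → ℕ // (n : ℝ) < ∑ j, (s j : ℝ) * (r j / r₁)} =>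
        (2 : ℝ) ^ (∑ j, s.1 j) * a s.1)
    · have hpt : ∀ s : {s : Fin d → ℕ // (n : ℝ) < ∑ j, (s j : ℝ) * (r j / r₁)},
          (2 : ℝ) ^ (∑ j, s.1 j) * a s.1
            ≤ (2 : ℝ) ^ (-(n : ℝ) * (r₁ - 1)) * ((2:ℝ) ^ (∑ j, (s.1 j : ℝ) * r j) * a s.1) := by
        rintro ⟨s, hs⟩
        have h1 : ((2:ℝ) ^ (∑ j, s j) : ℝ) = (2:ℝ) ^ ((∑ j, s j : ℕ) : ℝ) :=
          (Real.rpow_natCast 2 _).symm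
        have h2 : (2:ℝ) ^ (((∑ j, s j : ℕ)) : ℝ) ≤ (2:ℝ) ^ (-(n : ℝ) * (r₁ - 1) + ∑ j, (s j : ℝ) * r j) := by
          apply Real.rpow_le_rpow_of_exponent_le one_le_two
          have hk := hkey s n hs
          push_cast
          have : (∑ j, ((s j : ℝ))) = ∑ j, ((s j:ℝ) * r j - (s j:ℝ) * (r j - 1)) := by
            apply Finset.sum_congr rfl
            intro j _
            ring
          rw [this, Finset.sum_sub_distrib]
          linarith
      
        calc (2 : ℝ) ^ (∑ j, s j) * a s
            ≤ (2:ℝ) ^ (-(n : ℝ) * (r₁ - 1) + ∑ j, (s j : ℝ) * r j) * a s := by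
              apply mul_le_mul_of_nonneg_right _ (ha s)
              rw [h1]
              exact h2
          _ = (2 : ℝ) ^ (-(n : ℝ) * (r₁ - 1)) * ((2:ℝ) ^ (∑ j, (s j : ℝ) * r j) * a s) := by
              rw [Real.rpow_add two_pos]
              ring
      have hsub : Summable (fun s : {s : Fin d → ℕ // (n : ℝ) < ∑ j, (s j : ℝ) * (r j / r₁)} =>
          (2:ℝ) ^ (∑ j, (s.1 j : ℝ) * r j) * a s.1) := hsum.subtype _
      calc (∑' s : {s : Fin d → ℕ // (n : ℝ) < ∑ j, (s j : ℝ) * (r j / r₁)},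
            (2 : ℝ) ^ (∑ j, s.1 j) * a s.1)
          ≤ (∑' s : {s : Fin d → ℕ // (n : ℝ) < ∑ j, (s j : ℝ) * (r j / r₁)},
            (2 : ℝ) ^ (-(n : ℝ) * (r₁ - 1)) * ((2:ℝ) ^ (∑ j, (s.1 j : ℝ) * r j) * a s.1)) :=
            Summable.tsum_le_tsum hpt hS (hsub.mul_left _)
        _ = (2 : ℝ) ^ (-(n : ℝ) * (r₁ - 1)) * (∑' s : {s : Fin d → ℕ // (n : ℝ) < ∑ j, (s j : ℝ) * (r j / r₁)},
            (2:ℝ) ^ (∑ j, (s.1 j : ℝ) * r j) * a s.1) := tsum_mul_left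
        _ ≤ (2 : ℝ) ^ (-(n : ℝ) * (r₁ - 1)) * 1 := by
            apply mul_le_mul_of_nonneg_left _ (by positivity)
            refine le_trans ?_ hT1
            exact Summable.tsum_subtype_le _ _ (fun s => by have := ha s; positivity) hsum
        _ = (2 : ℝ) ^ (-(n : ℝ) * (r₁ - 1)) := by ring
    · rw [tsum_eq_zero_of_not_summable hS]
      positivity
  · -- case θ > 1
    have hθ' : 1 < θ := lt_of_le_of_ne hθ (Ne.symm hθ1)
    have hθ0 : (0:ℝ) < θ := by linarith
    have hconj : θ.HolderConjugate (Real.conjExponent θ) := Real.HolderConjugate.conjExponent hθ'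
    set β : ℝ := Real.conjExponent θ with hβdef
    have hβpos : 0 < β := hconj.symm.pos
    have hinv : 1/θ + 1/β = 1 := by
      have := hconj.inv_add_inv_eq_one
      rw [one_div, one_div]
      linarith
    obtain ⟨CB, hCB, hlemB⟩ := lemB d ν hν hνd r r₁ hr₁ hsmall hbig hmono β hβpos
    refine ⟨CB ^ (1/β), Real.rpow_pos_of_pos hCB _, ?_⟩
    intro a ha hsum hle n hn
    have hnpos : (0:ℝ) < (n:ℝ) := by exact_mod_cast hn
    -- hypothesis sum at most one
    have hTnn : 0 ≤ (∑' s : Fin d → ℕ, (2:ℝ) ^ ((∑ j, (s j : ℝ) * r j) * θ) * a s ^ θ) :=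
      tsum_nonneg (fun s => mul_nonneg (Real.rpow_nonneg (by norm_num) _)
        (Real.rpow_nonneg (ha s) _))
    have hT1 : (∑' s : Fin d → ℕ, (2:ℝ) ^ ((∑ j, (s j : ℝ) * r j) * θ) * a s ^ θ) ≤ 1 := by
      have h := Real.rpow_le_one (Real.rpow_nonneg hTnn _) hle hθ0.le
      rwa [← Real.rpow_mul hTnn, one_div, inv_mul_cancel₀ hθ0.ne', Real.rpow_one] at h
    -- output of lemB
    set B' : ℝ := CB * (2:ℝ) ^ (-(β * (r₁ - 1)) * (n:ℝ)) * (n:ℝ) ^ (ν - 1 : ℕ) with hB'def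
    have hB'pos : 0 < B' :=
      mul_pos (mul_pos hCB (Real.rpow_pos_of_pos two_pos _)) (pow_pos hnpos _)
    have hlem := hlemB n hn
    set G : {s : Fin d → ℕ // (n : ℝ) < ∑ j, (s j : ℝ) * (r j / r₁)} → ℝ≥0∞ :=
      fun s => ENNReal.ofReal ((2:ℝ) ^ (-β * ∑ j, (s.1 j:ℝ) * (r j - 1))) with hGdef
    have hGne : ∀ s, G s ≠ ⊤ := fun s => ENNReal.ofReal_ne_top
    have hGfin : (∑' s, G s) ≠ ⊤ := (lt_of_le_of_lt hlem ENNReal.ofReal_lt_top).ne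
    have hysummable : Summable (fun s : {s : Fin d → ℕ // (n : ℝ) < ∑ j, (s j : ℝ) * (r j / r₁)} =>
        (2:ℝ) ^ (-β * ∑ j, (s.1 j:ℝ) * (r j - 1))) := by
      apply Summable.congr (ENNReal.summable_toReal hGfin)
      intro s
      exact ENNReal.toReal_ofReal (by positivity)
    have hybound : (∑' s : {s : Fin d → ℕ // (n : ℝ) < ∑ j, (s j : ℝ) * (r j / r₁)},
        (2:ℝ) ^ (-β * ∑ j, (s.1 j:ℝ) * (r j - 1))) ≤ B' := by
      have h1 : (∑' s, G s).toReal ≤ (ENNReal.ofReal B').toReal :=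
        ENNReal.toReal_mono ENNReal.ofReal_ne_top hlem
      rw [ENNReal.toReal_ofReal hB'pos.le] at h1
      calc (∑' s : {s : Fin d → ℕ // (n : ℝ) < ∑ j, (s j : ℝ) * (r j / r₁)},
            (2:ℝ) ^ (-β * ∑ j, (s.1 j:ℝ) * (r j - 1)))
          = ∑' s, (G s).toReal :=
            tsum_congr (fun s => (ENNReal.toReal_ofReal (by positivity)).symm)
        _ = (∑' s, G s).toReal := (ENNReal.tsum_toReal_eq hGne).symm
        _ ≤ B' := h1
    by_cases hS : Summable (fun s : {s : Fin d → ℕ // (n : ℝ) < ∑ j, (s j : ℝ) * (r j / r₁)} =>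
        (2 : ℝ) ^ (∑ j, s.1 j) * a s.1)
    · -- Young / Hölder step
      set lam : ℝ := B' ^ (1/(θ*β)) with hlamdef
      have hlampos : 0 < lam := Real.rpow_pos_of_pos hB'pos _
      have hpt : ∀ s : {s : Fin d → ℕ // (n : ℝ) < ∑ j, (s j : ℝ) * (r j / r₁)},
          (2 : ℝ) ^ (∑ j, s.1 j) * a s.1
            ≤ (lam ^ θ / θ) * ((2:ℝ) ^ ((∑ j, (s.1 j : ℝ) * r j) * θ) * a s.1 ^ θ)
              + ((1/lam) ^ β / β) * ((2:ℝ) ^ (-β * ∑ j, (s.1 j:ℝ) * (r j - 1))) := by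
        rintro ⟨s, hs⟩
        set E1 : ℝ := ∑ j, (s j:ℝ) * r j with hE1
        set E2 : ℝ := ∑ j, (s j:ℝ) * (r j - 1) with hE2
        set x : ℝ := (2:ℝ) ^ E1 * a s with hxdef
        set y : ℝ := (2:ℝ) ^ (-E2) with hydef
        have hx0 : 0 ≤ x := mul_nonneg (Real.rpow_nonneg (by norm_num) _) (ha s)
        have hy0 : 0 < y := Real.rpow_pos_of_pos two_pos _
        have hE : E1 - E2 = ∑ j, (s j:ℝ) := by
          rw [hE1, hE2, ← Finset.sum_sub_distrib]
          apply Finset.sum_congr rfl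
          intro j _
          ring
        have h0 : (2 : ℝ) ^ (∑ j, s j) * a s = x * y := by
          have hc : ((2:ℝ) ^ (∑ j, s j) : ℝ) = (2:ℝ) ^ ((∑ j, s j : ℕ) : ℝ) :=
            (Real.rpow_natCast 2 _).symm
          rw [hc, hxdef, hydef]
          rw [show ((∑ j, s j : ℕ) : ℝ) = ∑ j, (s j:ℝ) by push_cast; rfl]
          rw [← hE]
          rw [show E1 - E2 = E1 + (-E2) by ring, Real.rpow_add two_pos]
          ring
        have hY := Real.young_inequality_of_nonneg
          (mul_nonneg hlampos.le hx0) (le_of_lt (div_pos hy0 hlampos)) hconj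
        have hxy : (lam * x) * (y / lam) = x * y := by
          field_simp
        have h₁ : (lam * x) ^ θ = lam ^ θ * ((2:ℝ) ^ (E1 * θ) * a s ^ θ) := by
          rw [Real.mul_rpow hlampos.le hx0, hxdef,
            Real.mul_rpow (Real.rpow_nonneg (by norm_num) _) (ha s),
            ← Real.rpow_mul (by norm_num : (0:ℝ) ≤ 2)]
        have h₂ : (y / lam) ^ β = (1/lam) ^ β * (2:ℝ) ^ (-β * E2) := by
          rw [show y / lam = (1/lam) * y by rw [one_div, div_eq_mul_inv, mul_comm],
            Real.mul_rpow (by positivity) hy0.le, hydef,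
            ← Real.rpow_mul (by norm_num : (0:ℝ) ≤ 2)]
          congr 2
          ring
        calc (2 : ℝ) ^ (∑ j, s j) * a s = x * y := h0
          _ = (lam * x) * (y / lam) := hxy.symm
          _ ≤ (lam * x) ^ θ / θ + (y / lam) ^ β / β := hY
          _ = (lam ^ θ / θ) * ((2:ℝ) ^ (E1 * θ) * a s ^ θ)
              + ((1/lam) ^ β / β) * ((2:ℝ) ^ (-β * E2)) := by
              rw [h₁, h₂]
              ring
      have hsum1 : Summable (fun s : {s : Fin d → ℕ // (n : ℝ) < ∑ j, (s j : ℝ) * (r j / r₁)} =>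
          (2:ℝ) ^ ((∑ j, (s.1 j : ℝ) * r j) * θ) * a s.1 ^ θ) := hsum.subtype _
      have hsumRHS : Summable (fun s : {s : Fin d → ℕ // (n : ℝ) < ∑ j, (s j : ℝ) * (r j / r₁)} =>
          (lam ^ θ / θ) * ((2:ℝ) ^ ((∑ j, (s.1 j : ℝ) * r j) * θ) * a s.1 ^ θ)
            + ((1/lam) ^ β / β) * ((2:ℝ) ^ (-β * ∑ j, (s.1 j:ℝ) * (r j - 1)))) :=
        (hsum1.mul_left _).add (hysummable.mul_left _)
      have hb1 : (∑' s : {s : Fin d → ℕ // (n : ℝ) < ∑ j, (s j : ℝ) * (r j / r₁)},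
          (2:ℝ) ^ ((∑ j, (s.1 j : ℝ) * r j) * θ) * a s.1 ^ θ) ≤ 1 := by
        refine le_trans (Summable.tsum_subtype_le
          (fun s : Fin d → ℕ => (2:ℝ) ^ ((∑ j, (s j : ℝ) * r j) * θ) * a s ^ θ)
          {s : Fin d → ℕ | (n : ℝ) < ∑ j, (s j : ℝ) * (r j / r₁)}
          (fun s => mul_nonneg
            (Real.rpow_nonneg (by norm_num) _) (Real.rpow_nonneg (ha s) _)) hsum) hT1
      have hb1nn : 0 ≤ (∑' s : {s : Fin d → ℕ // (n : ℝ) < ∑ j, (s j : ℝ) * (r j / r₁)},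
          (2:ℝ) ^ ((∑ j, (s.1 j : ℝ) * r j) * θ) * a s.1 ^ θ) :=
        tsum_nonneg (fun s => mul_nonneg (Real.rpow_nonneg (by norm_num) _)
          (Real.rpow_nonneg (ha s) _))
      have hybnn : 0 ≤ (∑' s : {s : Fin d → ℕ // (n : ℝ) < ∑ j, (s j : ℝ) * (r j / r₁)},
          (2:ℝ) ^ (-β * ∑ j, (s.1 j:ℝ) * (r j - 1))) :=
        tsum_nonneg (fun s => Real.rpow_nonneg (by norm_num) _)
      have hc1 : 0 ≤ lam ^ θ / θ := by positivity
      have hc2 : 0 ≤ (1/lam) ^ β / β := by positivity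
      have hmain : (∑' s : {s : Fin d → ℕ // (n : ℝ) < ∑ j, (s j : ℝ) * (r j / r₁)},
          (2 : ℝ) ^ (∑ j, s.1 j) * a s.1)
          ≤ (lam ^ θ / θ) * 1 + ((1/lam) ^ β / β) * B' := by
        calc (∑' s : {s : Fin d → ℕ // (n : ℝ) < ∑ j, (s j : ℝ) * (r j / r₁)},
              (2 : ℝ) ^ (∑ j, s.1 j) * a s.1)
            ≤ ∑' s : {s : Fin d → ℕ // (n : ℝ) < ∑ j, (s j : ℝ) * (r j / r₁)},
              ((lam ^ θ / θ) * ((2:ℝ) ^ ((∑ j, (s.1 j : ℝ) * r j) * θ) * a s.1 ^ θ)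
              + ((1/lam) ^ β / β) * ((2:ℝ) ^ (-β * ∑ j, (s.1 j:ℝ) * (r j - 1)))) :=
              Summable.tsum_le_tsum hpt hS hsumRHS
          _ = (lam ^ θ / θ) * (∑' s : {s : Fin d → ℕ // (n : ℝ) < ∑ j, (s j : ℝ) * (r j / r₁)},
              (2:ℝ) ^ ((∑ j, (s.1 j : ℝ) * r j) * θ) * a s.1 ^ θ)
              + ((1/lam) ^ β / β) * (∑' s : {s : Fin d → ℕ // (n : ℝ) < ∑ j, (s j : ℝ) * (r j / r₁)},
              (2:ℝ) ^ (-β * ∑ j, (s.1 j:ℝ) * (r j - 1))) := by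
              rw [Summable.tsum_add (hsum1.mul_left _) (hysummable.mul_left _),
                tsum_mul_left, tsum_mul_left]
          _ ≤ (lam ^ θ / θ) * 1 + ((1/lam) ^ β / β) * B' := by
              apply add_le_add
              · exact mul_le_mul_of_nonneg_left hb1 hc1
              · exact mul_le_mul_of_nonneg_left hybound hc2
      -- arithmetic with lam
      have hlθ : lam ^ θ = B' ^ (1/β) := by
        rw [hlamdef, ← Real.rpow_mul hB'pos.le]
        congr 1
        field_simp
      have hlβ : (1/lam) ^ β = B' ^ (-(1/θ)) := by
        rw [hlamdef, one_div, ← Real.rpow_neg hB'pos.le, ← Real.rpow_mul hB'pos.le]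
        congr 1
        field_simp
      have harith : (lam ^ θ / θ) * 1 + ((1/lam) ^ β / β) * B' = B' ^ (1/β) := by
        rw [hlθ, hlβ]
        have h1 : B' ^ (-(1/θ)) * B' = B' ^ (1/β) := by
          rw [show B' ^ (-(1/θ)) * B' = B' ^ (-(1/θ)) * B' ^ (1:ℝ) by rw [Real.rpow_one],
            ← Real.rpow_add hB'pos]
          congr 1
          linarith
        calc B' ^ (1/β) / θ * 1 + B' ^ (-(1/θ)) / β * B'
            = B' ^ (1/β) * (1/θ) + (B' ^ (-(1/θ)) * B') * (1/β) := by ring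
          _ = B' ^ (1/β) * (1/θ) + B' ^ (1/β) * (1/β) := by rw [h1]
          _ = B' ^ (1/β) * (1/θ + 1/β) := by ring
          _ = B' ^ (1/β) := by rw [hinv, mul_one]
      -- final identification
      have hfinal : B' ^ (1/β) = CB ^ (1/β) * (2 : ℝ) ^ (-(n : ℝ) * (r₁ - 1)) *
          (n : ℝ) ^ (((ν : ℝ) - 1) * (1 - 1 / θ)) := by
        rw [hB'def]
        rw [Real.mul_rpow (mul_nonneg hCB.le (Real.rpow_nonneg (by norm_num) _)) (by positivity),
          Real.mul_rpow hCB.le (Real.rpow_nonneg (by norm_num) _)]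
        congr 1
        · congr 1
          rw [← Real.rpow_mul (by norm_num : (0:ℝ) ≤ 2)]
          congr 1
          field_simp
        · rw [← Real.rpow_natCast (n:ℝ) (ν - 1), ← Real.rpow_mul hnpos.le]
          congr 1
          have hcast : ((ν - 1 : ℕ) : ℝ) = (ν:ℝ) - 1 := by
            push_cast [Nat.cast_sub hν]
            ring
          rw [hcast]
          have hβinv : 1/β = 1 - 1/θ := by linarith
          rw [hβinv]
      rw [← hfinal]
      exact le_trans hmain (le_of_eq harith)
    · rw [tsum_eq_zero_of_not_summable hS]
      have h1 : (0:ℝ) < CB ^ (1/β) := Real.rpow_pos_of_pos hCB _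
      have h2 : (0:ℝ) < (2 : ℝ) ^ (-(n : ℝ) * (r₁ - 1)) := Real.rpow_pos_of_pos two_pos _
      have h3 : (0:ℝ) < (n : ℝ) ^ (((ν : ℝ) - 1) * (1 - 1 / θ)) := Real.rpow_pos_of_pos hnpos _
      positivity
end

section
/- Let d ≥ 1, 1 < q < ∞, r₁ > 1 − 1/q, and suppose nonnegative reals a_s (s ∈ ℤ₊^d) satisfy sup_{s≥0} 2^{(s,r)} a_s ≤ 1, where r has smallest coordinate r₁ with multiplicity ν and γ_j = r_j/r₁. Then (Σ_{(s,γ)>n} a_s^q · 2^{‖s‖₁(1−1/q)q})^{1/q} ≤ C·2^{−n(r₁−1+1/q)}·n^{(ν−1)/q} for a constant C independent of n and (a_s). -/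
open scoped BigOperators
open Finset

private lemma stmt15_geom_sum (z : ℝ) (h0 : 0 ≤ z) (h1 : z < 1) (N : ℕ) :
    ∑ k ∈ Finset.range N, z ^ k ≤ (1 - z)⁻¹ := by
  have hsum : Summable (fun k : ℕ => z ^ k) := summable_geometric_of_lt_one h0 h1
  calc ∑ k ∈ Finset.range N, z ^ k ≤ ∑' k : ℕ, z ^ k :=
        Summable.sum_le_tsum _ (fun k _ => pow_nonneg h0 k) hsum
    _ = (1 - z)⁻¹ := tsum_geometric_of_lt_one h0 h1

private lemma stmt15_summable (w : ℝ) (h0 : 0 < w) (h1 : w < 1) (p : ℕ) :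
    Summable (fun k : ℕ => ((k : ℝ) + 1) ^ p * w ^ k) := by
  have hw : ‖w‖ < 1 := by rwa [Real.norm_of_nonneg h0.le]
  have h1' : Summable (fun k : ℕ => (k : ℝ) ^ p * w ^ k) :=
    summable_pow_mul_geometric_of_norm_lt_one p hw
  have h2 : Summable (fun k : ℕ => ((k + 1 : ℕ) : ℝ) ^ p * w ^ (k + 1)) :=
    (summable_nat_add_iff 1).2 h1'
  refine (h2.mul_left w⁻¹).congr fun k => ?_
  have hwne : w ≠ 0 := ne_of_gt h0
  push_cast
  rw [pow_succ]
  field_simp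

private lemma stmt15_rpow_sum {ι : Type*} (s : Finset ι) (f : ι → ℝ) :
    (2 : ℝ) ^ (∑ i ∈ s, f i) = ∏ i ∈ s, (2 : ℝ) ^ f i := by
  classical
  induction s using Finset.induction_on with
  | empty => simp
  | insert a s ha ih =>
      rw [Finset.sum_insert ha, Finset.prod_insert ha, Real.rpow_add two_pos, ih]

private lemma stmt15_card (d ν : ℕ) (hν : 1 ≤ ν) (hνd : ν ≤ d) :
    (Finset.univ.filter fun j : Fin d => (j : ℕ) ≠ 0 ∧ (j : ℕ) < ν).card = ν - 1 := by
  have himg : (Finset.univ.filter fun j : Fin d => (j : ℕ) ≠ 0 ∧ (j : ℕ) < ν).image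
      Fin.val = Finset.Ico 1 ν := by
    ext k
    simp only [Finset.mem_image, Finset.mem_filter, Finset.mem_univ, true_and,
      Finset.mem_Ico]
    constructor
    · rintro ⟨j, ⟨h1, h2⟩, rfl⟩; omega
    · rintro ⟨h1, h2⟩
      refine ⟨⟨k, lt_of_lt_of_le h2 hνd⟩, ⟨?_, ?_⟩, rfl⟩
      · simp only [Fin.val_mk]; omega
      · simp only [Fin.val_mk]; omega
  have := Finset.card_image_of_injective
    (Finset.univ.filter fun j : Fin d => (j : ℕ) ≠ 0 ∧ (j : ℕ) < ν) Fin.val_injective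
  rw [himg] at this
  rw [← this, Nat.card_Ico]

set_option maxHeartbeats 1600000 in
private lemma stmt15_fiber (d ν : ℕ) (hν : 1 ≤ ν) (hνd : ν ≤ d)
    (γ : Fin d → ℝ) (hγ0 : ∀ j, 0 ≤ γ j) (hγ1 : ∀ j : Fin d, (j : ℕ) < ν → γ j = 1)
    (z : Fin d → ℝ) (hz0 : ∀ j, 0 ≤ z j) (hz1 : ∀ j : Fin d, (j : ℕ) < ν → z j = 1)
    (hzlt : ∀ j : Fin d, ν ≤ (j : ℕ) → z j < 1)
    (m : ℕ) (hm : 1 ≤ m) (F : Finset (Fin d → ℕ))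
    (hF : ∀ s ∈ F, ⌈∑ j, (s j : ℝ) * γ j⌉₊ = m) :
    ∑ s ∈ F, ∏ j, z j ^ s j ≤
      ((m : ℝ) + 1) ^ (ν - 1) * ∏ j : Fin d, (if (j : ℕ) < ν then 1 else (1 - z j)⁻¹) := by
  have hd : 1 ≤ d := le_trans hν hνd
  let j0 : Fin d := ⟨0, hd⟩
  have hGle : ∀ s ∈ F, (∑ j, (s j : ℝ) * γ j) ≤ (m : ℝ) := by
    intro s hs
    have := Nat.le_ceil (∑ j, (s j : ℝ) * γ j)
    rw [hF s hs] at this; exact this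
  have hGgt : ∀ s ∈ F, (m : ℝ) - 1 < (∑ j, (s j : ℝ) * γ j) := by
    intro s hs
    have h1 : m - 1 < ⌈∑ j, (s j : ℝ) * γ j⌉₊ := by rw [hF s hs]; omega
    have := Nat.lt_ceil.1 h1
    rwa [Nat.cast_sub hm, Nat.cast_one] at this
  obtain ⟨N, hcoord⟩ : ∃ N : ℕ, ∀ s ∈ F, ∀ j : Fin d, s j < N := by
    refine ⟨1 + F.sup (fun s => ∑ j, s j), fun s hs j => ?_⟩
    have h1 : s j ≤ ∑ j, s j :=
      Finset.single_le_sum (f := fun j => s j) (fun i _ => Nat.zero_le _)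
        (Finset.mem_univ j)
    have h2 : ∑ j, s j ≤ F.sup (fun s => ∑ j, s j) := Finset.le_sup hs
    rw [Nat.add_comm]
    exact Nat.lt_succ_of_le (le_trans h1 h2)
  set t : Fin d → Finset ℕ := fun j =>
    if (j : ℕ) = 0 then {0} else if (j : ℕ) < ν then Finset.range (m + 1)
      else Finset.range N with htdef
  set e : (Fin d → ℕ) → (Fin d → ℕ) := fun s j => if (j : ℕ) = 0 then 0 else s j
    with hedef
  have hprod : ∀ s : Fin d → ℕ, ∏ j, z j ^ (e s j) = ∏ j, z j ^ s j := by
    intro s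
    refine Finset.prod_congr rfl fun j _ => ?_
    by_cases h : (j : ℕ) = 0
    · have hzj : z j = 1 := hz1 j (by omega)
      simp [hzj]
    · simp [hedef, h]
  have hinj : ∀ s₁ ∈ F, ∀ s₂ ∈ F, e s₁ = e s₂ → s₁ = s₂ := by
    intro s₁ hs₁ s₂ hs₂ hee
    have hoff : ∀ j : Fin d, (j : ℕ) ≠ 0 → s₁ j = s₂ j := by
      intro j hj
      have := congrFun hee j
      simpa [hedef, hj] using this
    have hγj0 : γ j0 = 1 := hγ1 j0 (by show 0 < ν; omega)
    have hdecomp : ∀ s : Fin d → ℕ,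
        (∑ j, (s j : ℝ) * γ j)
          = (s j0 : ℝ) + ∑ j ∈ Finset.univ.erase j0, (s j : ℝ) * γ j := by
      intro s
      rw [← Finset.add_sum_erase _ _ (Finset.mem_univ j0), hγj0, mul_one]
    have hA : ∑ j ∈ Finset.univ.erase j0, (s₁ j : ℝ) * γ j
        = ∑ j ∈ Finset.univ.erase j0, (s₂ j : ℝ) * γ j := by
      refine Finset.sum_congr rfl fun j hj => ?_
      have hjne : j ≠ j0 := (Finset.mem_erase.1 hj).1
      have hjval : (j : ℕ) ≠ 0 := fun h => hjne (Fin.ext h)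
      rw [hoff j hjval]
    have h1le := hGle s₁ hs₁
    have h2le := hGle s₂ hs₂
    have h1gt := hGgt s₁ hs₁
    have h2gt := hGgt s₂ hs₂
    rw [hdecomp s₁, hA] at h1le h1gt
    rw [hdecomp s₂] at h2le h2gt
    have hval : s₁ j0 = s₂ j0 := by
      have e1 : (s₁ j0 : ℝ) < (s₂ j0 : ℝ) + 1 := by linarith
      have e2 : (s₂ j0 : ℝ) < (s₁ j0 : ℝ) + 1 := by linarith
      have e1' : s₁ j0 < s₂ j0 + 1 := by exact_mod_cast e1
      have e2' : s₂ j0 < s₁ j0 + 1 := by exact_mod_cast e2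
      omega
    funext j
    by_cases h : (j : ℕ) = 0
    · have hjj : j = j0 := Fin.ext h
      rw [hjj]; exact hval
    · exact hoff j h
  have hmem : ∀ s ∈ F, e s ∈ Fintype.piFinset t := by
    intro s hs
    rw [Fintype.mem_piFinset]
    intro j
    by_cases h0 : (j : ℕ) = 0
    · simp [hedef, htdef, h0]
    · by_cases hlt : (j : ℕ) < ν
      · have hsj : (s j : ℝ) ≤ (m : ℝ) := by
          have h1 : (s j : ℝ) * γ j ≤ ∑ i, (s i : ℝ) * γ i :=
            Finset.single_le_sum (f := fun i => (s i : ℝ) * γ i)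
              (fun i _ => mul_nonneg (Nat.cast_nonneg _) (hγ0 i)) (Finset.mem_univ j)
          rw [hγ1 j hlt, mul_one] at h1
          exact le_trans h1 (hGle s hs)
        have hsj' : s j ≤ m := by exact_mod_cast hsj
        simp only [hedef, htdef, h0, hlt, if_false, if_true, Finset.mem_range]
        omega
      · simp only [hedef, htdef, h0, hlt, if_false, Finset.mem_range]
        exact hcoord s hs j
  calc ∑ s ∈ F, ∏ j, z j ^ s j
      = ∑ s ∈ F, ∏ j, z j ^ (e s j) :=
        Finset.sum_congr rfl fun s _ => (hprod s).symm
    _ = ∑ v ∈ F.image e, ∏ j, z j ^ v j :=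
        (Finset.sum_image (f := fun v => ∏ j : Fin d, z j ^ v j) (g := e) hinj).symm
    _ ≤ ∑ v ∈ Fintype.piFinset t, ∏ j, z j ^ v j := by
        refine Finset.sum_le_sum_of_subset_of_nonneg ?_ ?_
        · intro v hv
          obtain ⟨s, hs, rfl⟩ := Finset.mem_image.1 hv
          exact hmem s hs
        · intro v _ _
          exact Finset.prod_nonneg fun j _ => pow_nonneg (hz0 j) _
    _ = ∏ j : Fin d, ∑ k ∈ t j, z j ^ k := (Finset.prod_univ_sum t fun j k => z j ^ k).symm
    _ ≤ ∏ j : Fin d, (if (j : ℕ) = 0 then 1 else if (j : ℕ) < ν then ((m : ℝ) + 1)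
          else (1 - z j)⁻¹) := by
        refine Finset.prod_le_prod (fun j _ => Finset.sum_nonneg fun k _ =>
          pow_nonneg (hz0 j) k) (fun j _ => ?_)
        by_cases h0 : (j : ℕ) = 0
        · simp [htdef, h0]
        · by_cases hlt : (j : ℕ) < ν
          · simp only [htdef, h0, hlt, if_false, if_true]
            rw [show (∑ k ∈ Finset.range (m + 1), z j ^ k)
                = ∑ k ∈ Finset.range (m + 1), (1 : ℝ) by
              refine Finset.sum_congr rfl fun k _ => by rw [hz1 j hlt, one_pow]]
            simp
          · simp only [htdef, h0, hlt, if_false]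
            exact stmt15_geom_sum (z j) (hz0 j) (hzlt j (by omega)) N
    _ = ((m : ℝ) + 1) ^ (ν - 1)
          * ∏ j : Fin d, (if (j : ℕ) < ν then 1 else (1 - z j)⁻¹) := by
        have hsplit : ∀ j : Fin d, (if (j : ℕ) = 0 then 1 else if (j : ℕ) < ν
            then ((m : ℝ) + 1) else (1 - z j)⁻¹)
            = (if (j : ℕ) ≠ 0 ∧ (j : ℕ) < ν then ((m : ℝ) + 1) else 1) *
              (if (j : ℕ) < ν then 1 else (1 - z j)⁻¹) := by
          intro j
          by_cases h0 : (j : ℕ) = 0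
          · have hlt : (j : ℕ) < ν := by omega
            have hν0 : 0 < ν := hν
            simp [h0, hlt, hν0]
          · by_cases hlt : (j : ℕ) < ν
            · simp [h0, hlt]
            · simp [h0, hlt]
        rw [Finset.prod_congr rfl (fun j _ => hsplit j), Finset.prod_mul_distrib]
        congr 1
        rw [← Finset.prod_filter (fun j : Fin d => (j : ℕ) ≠ 0 ∧ (j : ℕ) < ν)
          (fun _ => ((m : ℝ) + 1))]
        rw [Finset.prod_const, stmt15_card d ν hν hνd]

set_option maxHeartbeats 1600000 in
private lemma stmt15_main (d ν : ℕ) (hν : 1 ≤ ν) (hνd : ν ≤ d)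
    (γ σ : Fin d → ℝ) (c : ℝ) (hc : 0 < c)
    (hγ0 : ∀ j, 0 ≤ γ j) (hγ1 : ∀ j : Fin d, (j : ℕ) < ν → γ j = 1)
    (hσ0 : ∀ j, 0 ≤ σ j) (hσ1 : ∀ j : Fin d, (j : ℕ) < ν → σ j = 0)
    (hσpos : ∀ j : Fin d, ν ≤ (j : ℕ) → 0 < σ j) :
    ∃ C : ℝ, 0 < C ∧ ∀ n : ℕ, 1 ≤ n → ∀ F : Finset (Fin d → ℕ),
      (∀ s ∈ F, (n : ℝ) < ∑ j, (s j : ℝ) * γ j) →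
      ∑ s ∈ F, (2 : ℝ) ^ (-(c * (∑ j, (s j : ℝ) * γ j) + ∑ j, σ j * (s j : ℝ))) ≤
        C * (2 : ℝ) ^ (-(c * (n : ℝ))) * (n : ℝ) ^ (ν - 1) := by
  set z : Fin d → ℝ := fun j => (2 : ℝ) ^ (-(σ j)) with hzdef
  have hz0 : ∀ j, 0 ≤ z j := fun j => (Real.rpow_pos_of_pos two_pos _).le
  have hz1 : ∀ j : Fin d, (j : ℕ) < ν → z j = 1 := by
    intro j hj; simp [hzdef, hσ1 j hj]
  have hzlt : ∀ j : Fin d, ν ≤ (j : ℕ) → z j < 1 := by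
    intro j hj
    exact Real.rpow_lt_one_of_one_lt_of_neg one_lt_two (by linarith [hσpos j hj])
  set Y : ℝ := ∏ j : Fin d, (if (j : ℕ) < ν then 1 else (1 - z j)⁻¹) with hYdef
  have hYpos : 0 < Y := by
    refine Finset.prod_pos fun j _ => ?_
    by_cases h : (j : ℕ) < ν
    · simp [h]
    · simp only [h, if_false]
      exact inv_pos.2 (by linarith [hzlt j (by omega)])
  set w : ℝ := (2 : ℝ) ^ (-c) with hwdef
  have hw0 : 0 < w := Real.rpow_pos_of_pos two_pos _
  have hw1 : w < 1 := Real.rpow_lt_one_of_one_lt_of_neg one_lt_two (by linarith)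
  have hKsum : Summable (fun k : ℕ => ((k : ℝ) + 1) ^ (ν - 1) * w ^ k) :=
    stmt15_summable w hw0 hw1 (ν - 1)
  set K : ℝ := ∑' k : ℕ, ((k : ℝ) + 1) ^ (ν - 1) * w ^ k with hKdef
  have hKpos : 0 < K := by
    have h1 : (1:ℝ) ≤ K := by
      have := Summable.le_tsum hKsum 0 (fun j _ => mul_nonneg (by positivity) (pow_nonneg hw0.le j))
      simpa using this
    linarith
  refine ⟨Y * K * 3 ^ (ν - 1), by positivity, ?_⟩
  intro n hn F hF
  have hzpow : ∀ (j : Fin d) (k : ℕ), z j ^ k = (2 : ℝ) ^ (-(σ j) * (k : ℝ)) := by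
    intro j k
    rw [Real.rpow_mul (by norm_num : (0:ℝ) ≤ 2), Real.rpow_natCast]
  have hwpow : ∀ k : ℕ, w ^ k = (2 : ℝ) ^ (-c * (k : ℝ)) := by
    intro k
    rw [Real.rpow_mul (by norm_num : (0:ℝ) ≤ 2), Real.rpow_natCast]
  have hceil : ∀ s ∈ F, n + 1 ≤ ⌈∑ j, (s j : ℝ) * γ j⌉₊ := by
    intro s hs
    exact Nat.lt_ceil.2 (hF s hs)
  set gf : (Fin d → ℕ) → ℕ := fun s => ⌈∑ j, (s j : ℝ) * γ j⌉₊ - (n + 1) with hgfdef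
  obtain ⟨M, hmaps⟩ : ∃ M : ℕ, ∀ s ∈ F, gf s ∈ Finset.range M := by
    refine ⟨1 + F.sup gf, fun s hs => ?_⟩
    have h1 : gf s ≤ F.sup gf := Finset.le_sup hs
    simp only [Finset.mem_range]
    rw [Nat.add_comm]
    exact Nat.lt_succ_of_le h1
  have hfiber : ∀ k : ℕ, ∑ s ∈ F.filter (fun s => gf s = k),
      (2 : ℝ) ^ (-(c * (∑ j, (s j : ℝ) * γ j) + ∑ j, σ j * (s j : ℝ))) ≤
      (2 : ℝ) ^ (-(c * (n : ℝ))) * w ^ k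
        * (((n : ℝ) + 2) ^ (ν - 1) * ((k : ℝ) + 1) ^ (ν - 1)) * Y := by
    intro k
    have hm1 : 1 ≤ n + 1 + k := by omega
    have hFm : ∀ s ∈ F.filter (fun s => gf s = k),
        ⌈∑ j, (s j : ℝ) * γ j⌉₊ = n + 1 + k := by
      intro s hs
      obtain ⟨hsF, hsk⟩ := Finset.mem_filter.1 hs
      have := hceil s hsF
      simp only [hgfdef] at hsk
      omega
    have step1 : ∀ s ∈ F.filter (fun s => gf s = k),
        (2 : ℝ) ^ (-(c * (∑ j, (s j : ℝ) * γ j) + ∑ j, σ j * (s j : ℝ))) ≤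
        (2 : ℝ) ^ (-(c * (((n + 1 + k : ℕ) : ℝ) - 1))) * ∏ j, z j ^ s j := by
      intro s hs
      have hGgt : ((n + 1 + k : ℕ) : ℝ) - 1 < ∑ j, (s j : ℝ) * γ j := by
        have h1 : (n + 1 + k) - 1 < ⌈∑ j, (s j : ℝ) * γ j⌉₊ := by rw [hFm s hs]; omega
        have := Nat.lt_ceil.1 h1
        rwa [Nat.cast_sub hm1, Nat.cast_one] at this
      have hsplit : (2 : ℝ) ^ (-(c * (∑ j, (s j : ℝ) * γ j) + ∑ j, σ j * (s j : ℝ))) =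
          (2 : ℝ) ^ (-(c * (∑ j, (s j : ℝ) * γ j))) * ∏ j, z j ^ s j := by
        rw [show -(c * (∑ j, (s j : ℝ) * γ j) + ∑ j, σ j * (s j : ℝ))
            = -(c * (∑ j, (s j : ℝ) * γ j)) + ∑ j, (-(σ j) * (s j : ℝ)) by
          rw [neg_add]
          congr 1
          rw [← Finset.sum_neg_distrib]
          exact Finset.sum_congr rfl fun j _ => by ring]
        rw [Real.rpow_add two_pos, stmt15_rpow_sum]
        congr 1
        exact Finset.prod_congr rfl fun j _ => (hzpow j (s j)).symm
      rw [hsplit]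
      refine mul_le_mul_of_nonneg_right ?_
        (Finset.prod_nonneg fun j _ => pow_nonneg (hz0 j) _)
      refine Real.rpow_le_rpow_of_exponent_le one_le_two ?_
      have := mul_le_mul_of_nonneg_left hGgt.le hc.le
      linarith
    calc ∑ s ∈ F.filter (fun s => gf s = k),
        (2 : ℝ) ^ (-(c * (∑ j, (s j : ℝ) * γ j) + ∑ j, σ j * (s j : ℝ)))
        ≤ ∑ s ∈ F.filter (fun s => gf s = k),
          (2 : ℝ) ^ (-(c * (((n + 1 + k : ℕ) : ℝ) - 1))) * ∏ j, z j ^ s j :=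
          Finset.sum_le_sum step1
      _ = (2 : ℝ) ^ (-(c * (((n + 1 + k : ℕ) : ℝ) - 1)))
            * ∑ s ∈ F.filter (fun s => gf s = k), ∏ j, z j ^ s j := by
          rw [Finset.mul_sum]
      _ ≤ (2 : ℝ) ^ (-(c * (((n + 1 + k : ℕ) : ℝ) - 1)))
            * ((((n + 1 + k : ℕ) : ℝ) + 1) ^ (ν - 1) * Y) := by
          refine mul_le_mul_of_nonneg_left ?_ (Real.rpow_nonneg (by norm_num) _)
          exact stmt15_fiber d ν hν hνd γ hγ0 hγ1 z hz0 hz1 hzlt (n + 1 + k) hm1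
            (F.filter (fun s => gf s = k)) hFm
      _ ≤ (2 : ℝ) ^ (-(c * (n : ℝ))) * w ^ k
            * (((n : ℝ) + 2) ^ (ν - 1) * ((k : ℝ) + 1) ^ (ν - 1)) * Y := by
          have hexp : (2 : ℝ) ^ (-(c * (((n + 1 + k : ℕ) : ℝ) - 1)))
              = (2 : ℝ) ^ (-(c * (n : ℝ))) * w ^ k := by
            rw [hwpow k, ← Real.rpow_add two_pos]
            congr 1
            push_cast
            ring
          have hpow : (((n + 1 + k : ℕ) : ℝ) + 1) ^ (ν - 1)
              ≤ ((n : ℝ) + 2) ^ (ν - 1) * ((k : ℝ) + 1) ^ (ν - 1) := by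
            rw [← mul_pow]
            refine pow_le_pow_left₀ (by positivity) ?_ _
            push_cast
            nlinarith [Nat.cast_nonneg (α := ℝ) n, Nat.cast_nonneg (α := ℝ) k]
          rw [hexp]
          have h2w : (0:ℝ) ≤ (2 : ℝ) ^ (-(c * (n : ℝ))) * w ^ k :=
            mul_nonneg (Real.rpow_nonneg (by norm_num) _) (pow_nonneg hw0.le _)
          calc (2 : ℝ) ^ (-(c * (n : ℝ))) * w ^ k
              * ((((n + 1 + k : ℕ) : ℝ) + 1) ^ (ν - 1) * Y)
              ≤ (2 : ℝ) ^ (-(c * (n : ℝ))) * w ^ k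
                * ((((n : ℝ) + 2) ^ (ν - 1) * ((k : ℝ) + 1) ^ (ν - 1)) * Y) := by
                refine mul_le_mul_of_nonneg_left ?_ h2w
                exact mul_le_mul_of_nonneg_right hpow hYpos.le
            _ = (2 : ℝ) ^ (-(c * (n : ℝ))) * w ^ k
                * (((n : ℝ) + 2) ^ (ν - 1) * ((k : ℝ) + 1) ^ (ν - 1)) * Y := by ring
  calc ∑ s ∈ F, (2 : ℝ) ^ (-(c * (∑ j, (s j : ℝ) * γ j) + ∑ j, σ j * (s j : ℝ)))
      = ∑ k ∈ Finset.range M, ∑ s ∈ F.filter (fun s => gf s = k),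
          (2 : ℝ) ^ (-(c * (∑ j, (s j : ℝ) * γ j) + ∑ j, σ j * (s j : ℝ))) :=
        (Finset.sum_fiberwise_of_maps_to hmaps _).symm
    _ ≤ ∑ k ∈ Finset.range M, (2 : ℝ) ^ (-(c * (n : ℝ))) * w ^ k
          * (((n : ℝ) + 2) ^ (ν - 1) * ((k : ℝ) + 1) ^ (ν - 1)) * Y :=
        Finset.sum_le_sum fun k _ => hfiber k
    _ = (2 : ℝ) ^ (-(c * (n : ℝ))) * (((n : ℝ) + 2) ^ (ν - 1)) * Y
          * ∑ k ∈ Finset.range M, ((k : ℝ) + 1) ^ (ν - 1) * w ^ k := by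
        rw [Finset.mul_sum]
        exact Finset.sum_congr rfl fun k _ => by ring
    _ ≤ (2 : ℝ) ^ (-(c * (n : ℝ))) * (((n : ℝ) + 2) ^ (ν - 1)) * Y * K := by
        refine mul_le_mul_of_nonneg_left ?_ (by positivity)
        exact Summable.sum_le_tsum _ (fun k _ => mul_nonneg (by positivity)
          (pow_nonneg hw0.le _)) hKsum
    _ ≤ Y * K * 3 ^ (ν - 1) * (2 : ℝ) ^ (-(c * (n : ℝ))) * (n : ℝ) ^ (ν - 1) := by
        have hn1 : (1 : ℝ) ≤ (n : ℝ) := by exact_mod_cast hn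
        have hpow : ((n : ℝ) + 2) ^ (ν - 1) ≤ 3 ^ (ν - 1) * (n : ℝ) ^ (ν - 1) := by
          rw [← mul_pow]
          exact pow_le_pow_left₀ (by positivity) (by linarith) _
        have h2 : (0:ℝ) ≤ (2 : ℝ) ^ (-(c * (n : ℝ))) := Real.rpow_nonneg (by norm_num) _
        nlinarith [mul_nonneg (mul_nonneg hYpos.le hKpos.le) h2,
          mul_le_mul_of_nonneg_left hpow (mul_nonneg (mul_nonneg hYpos.le hKpos.le) h2)]

set_option maxHeartbeats 1600000 in
theorem stmt_15 (d ν : ℕ) (hd : 1 ≤ d) (hν : 1 ≤ ν) (hνd : ν ≤ d)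
    (q : ℝ) (hq1 : 1 < q)
    (r : Fin d → ℝ) (r₁ : ℝ) (hr₁ : 1 - 1 / q < r₁)
    (hsmall : ∀ j : Fin d, (j : ℕ) < ν → r j = r₁)
    (hbig : ∀ j : Fin d, ν ≤ (j : ℕ) → r₁ < r j)
    (hmono : Monotone r) :
    ∃ C : ℝ, 0 < C ∧ ∀ a : (Fin d → ℕ) → ℝ, (∀ s, 0 ≤ a s) →
      (∀ s : Fin d → ℕ, (2 : ℝ) ^ (∑ j, (s j : ℝ) * r j) * a s ≤ 1) →
      ∀ n : ℕ, 1 ≤ n →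
        (∑' s : {s : Fin d → ℕ // (n : ℝ) < ∑ j, (s j : ℝ) * (r j / r₁)},
          a s.1 ^ q * (2 : ℝ) ^ ((∑ j, (s.1 j : ℝ)) * (1 - 1 / q) * q)) ^ (1 / q) ≤
        C * (2 : ℝ) ^ (-(n : ℝ) * (r₁ - 1 + 1 / q)) *
          (n : ℝ) ^ (((ν : ℝ) - 1) / q) := by
  have hq0 : (0 : ℝ) < q := by linarith
  have hiq : 1 / q < 1 := by
    rw [div_lt_one hq0]; exact hq1
  have hiq0 : 0 < 1 / q := by positivity
  have hρ₁ : 0 < r₁ - 1 + 1 / q := by linarith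
  have hr₁0 : 0 < r₁ := by linarith
  have hrge : ∀ j : Fin d, r₁ ≤ r j := by
    intro j
    by_cases h : (j : ℕ) < ν
    · exact le_of_eq (hsmall j h).symm
    · exact (hbig j (by omega)).le
  set c : ℝ := q * (r₁ - 1 + 1 / q) with hcdef
  have hc : 0 < c := by positivity
  set σf : Fin d → ℝ := fun j => q * (r j - 1 + 1 / q) - c * (r j / r₁) with hσdef
  have hσform : ∀ j : Fin d, σf j = q * (1 - 1 / q) * (r j - r₁) / r₁ := by
    intro j
    simp only [hσdef, hcdef]
    field_simp
    ring
  have hσ0 : ∀ j, 0 ≤ σf j := by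
    intro j
    rw [hσform j]
    have h1 := hrge j
    have h2 : (0:ℝ) ≤ 1 - 1 / q := by linarith
    have : 0 ≤ q * (1 - 1 / q) * (r j - r₁) := by
      apply mul_nonneg (mul_nonneg hq0.le h2); linarith
    positivity
  have hσ1 : ∀ j : Fin d, (j : ℕ) < ν → σf j = 0 := by
    intro j hj
    rw [hσform j, hsmall j hj]
    simp
  have hσpos : ∀ j : Fin d, ν ≤ (j : ℕ) → 0 < σf j := by
    intro j hj
    rw [hσform j]
    have h1 := hbig j hj
    have h2 : (0:ℝ) < 1 - 1 / q := by linarith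
    have h3 : (0:ℝ) < r j - r₁ := by linarith
    positivity
  have hγ0 : ∀ j : Fin d, 0 ≤ r j / r₁ := fun j =>
    div_nonneg (by linarith [hrge j]) hr₁0.le
  have hγ1 : ∀ j : Fin d, (j : ℕ) < ν → r j / r₁ = 1 := by
    intro j hj; rw [hsmall j hj]; exact div_self (ne_of_gt hr₁0)
  obtain ⟨C0, hC0, hkey⟩ :=
    stmt15_main d ν hν hνd (fun j => r j / r₁) σf c hc hγ0 hγ1 hσ0 hσ1 hσpos
  refine ⟨C0 ^ (1 / q), Real.rpow_pos_of_pos hC0 _, ?_⟩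
  intro a ha h2 n hn
  set D : (Fin d → ℕ) → ℝ := fun s =>
    (2 : ℝ) ^ (-(c * (∑ j, (s j : ℝ) * (r j / r₁)) + ∑ j, σf j * (s j : ℝ))) with hDdef
  have hterm : ∀ s : Fin d → ℕ,
      a s ^ q * (2 : ℝ) ^ ((∑ j, (s j : ℝ)) * (1 - 1 / q) * q) ≤ D s := by
    intro s
    simp only [hDdef]
    have hp : (0:ℝ) < (2 : ℝ) ^ (∑ j, (s j : ℝ) * r j) := Real.rpow_pos_of_pos two_pos _
    have hE : a s ≤ (2 : ℝ) ^ (-(∑ j, (s j : ℝ) * r j)) := by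
      rw [Real.rpow_neg (by norm_num : (0:ℝ) ≤ 2)]
      calc a s = ((2 : ℝ) ^ (∑ j, (s j : ℝ) * r j))⁻¹
            * ((2 : ℝ) ^ (∑ j, (s j : ℝ) * r j) * a s) := by
            rw [← mul_assoc, inv_mul_cancel₀ (ne_of_gt hp), one_mul]
        _ ≤ ((2 : ℝ) ^ (∑ j, (s j : ℝ) * r j))⁻¹ * 1 :=
            mul_le_mul_of_nonneg_left (h2 s) (inv_nonneg.2 hp.le)
        _ = ((2 : ℝ) ^ (∑ j, (s j : ℝ) * r j))⁻¹ := mul_one _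
    have hEq : a s ^ q ≤ (2 : ℝ) ^ (-(∑ j, (s j : ℝ) * r j) * q) := by
      rw [Real.rpow_mul (by norm_num : (0:ℝ) ≤ 2)]
      exact Real.rpow_le_rpow (ha s) hE hq0.le
    have hstep := mul_le_mul_of_nonneg_right hEq
      (Real.rpow_nonneg (by norm_num : (0:ℝ) ≤ 2) ((∑ j, (s j : ℝ)) * (1 - 1 / q) * q))
    refine le_trans hstep ?_
    rw [← Real.rpow_add two_pos]
    apply le_of_eq
    congr 1
    have hpt : ∀ j : Fin d, c * ((s j : ℝ) * (r j / r₁)) + σf j * (s j : ℝ)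
        = (s j : ℝ) * r j * q - (s j : ℝ) * ((1 - 1 / q) * q) := by
      intro j
      simp only [hσdef, hcdef]
      ring
    have hsum : c * (∑ j, (s j : ℝ) * (r j / r₁)) + ∑ j, σf j * (s j : ℝ)
        = (∑ j, (s j : ℝ) * r j) * q - (∑ j, (s j : ℝ)) * ((1 - 1 / q) * q) := by
      rw [Finset.mul_sum, ← Finset.sum_add_distrib, Finset.sum_mul, Finset.sum_mul,
        ← Finset.sum_sub_distrib]
      exact Finset.sum_congr rfl fun j _ => hpt j
    rw [hsum]
    ring
  have hB0 : (0:ℝ) ≤ C0 * (2 : ℝ) ^ (-(c * (n : ℝ))) * (n : ℝ) ^ (ν - 1) := by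
    have := Real.rpow_nonneg (by norm_num : (0:ℝ) ≤ 2) (-(c * (n : ℝ)))
    positivity
  have htsum : (∑' s : {s : Fin d → ℕ // (n : ℝ) < ∑ j, (s j : ℝ) * (r j / r₁)},
      a s.1 ^ q * (2 : ℝ) ^ ((∑ j, (s.1 j : ℝ)) * (1 - 1 / q) * q)) ≤
      C0 * (2 : ℝ) ^ (-(c * (n : ℝ))) * (n : ℝ) ^ (ν - 1) := by
    refine tsum_le_of_sum_le' hB0 ?_
    intro u
    have hs1 : ∑ s' ∈ u, a s'.1 ^ q * (2 : ℝ) ^ ((∑ j, (s'.1 j : ℝ)) * (1 - 1 / q) * q)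
        ≤ ∑ s' ∈ u, D s'.1 := Finset.sum_le_sum fun i _ => hterm i.1
    have hs2 : ∑ s ∈ u.image Subtype.val, D s = ∑ s' ∈ u, D s'.1 :=
      Finset.sum_image (fun x _ y _ h => Subtype.ext h)
    have hprop : ∀ s ∈ u.image Subtype.val, (n : ℝ) < ∑ j, (s j : ℝ) * (r j / r₁) := by
      intro s hs
      obtain ⟨s', _, rfl⟩ := Finset.mem_image.1 hs
      exact s'.2
    have hs3 : ∑ s ∈ u.image Subtype.val, D s
        ≤ C0 * (2 : ℝ) ^ (-(c * (n : ℝ))) * (n : ℝ) ^ (ν - 1) := by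
      have := hkey n hn (u.image Subtype.val) hprop
      simpa only [hDdef] using this
    linarith
  have hLnn : (0:ℝ) ≤ ∑' s : {s : Fin d → ℕ // (n : ℝ) < ∑ j, (s j : ℝ) * (r j / r₁)},
      a s.1 ^ q * (2 : ℝ) ^ ((∑ j, (s.1 j : ℝ)) * (1 - 1 / q) * q) :=
    tsum_nonneg fun s => mul_nonneg (Real.rpow_nonneg (ha s.1) q)
      (Real.rpow_nonneg (by norm_num) _)
  have hfin := Real.rpow_le_rpow hLnn htsum (by positivity : (0:ℝ) ≤ 1/q)
  refine le_trans hfin ?_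
  have hA0 : (0:ℝ) ≤ (2 : ℝ) ^ (-(c * (n : ℝ))) := Real.rpow_nonneg (by norm_num) _
  have hNB0 : (0:ℝ) ≤ ((n : ℝ)) ^ (ν - 1) := by positivity
  rw [Real.mul_rpow (mul_nonneg hC0.le hA0) hNB0, Real.mul_rpow hC0.le hA0]
  have hqne : q ≠ 0 := ne_of_gt hq0
  have e1 : ((2:ℝ) ^ (-(c * (n:ℝ)))) ^ (1/q) = (2:ℝ) ^ (-(n:ℝ) * (r₁ - 1 + 1/q)) := by
    rw [← Real.rpow_mul (by norm_num : (0:ℝ) ≤ 2)]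
    congr 1
    simp only [hcdef]
    have hq' : q * (1 / q) = 1 := by
      rw [mul_one_div, div_self hqne]
    linear_combination (-(n:ℝ) * (r₁ - 1 + 1 / q)) * hq'
  have e2 : (((n:ℝ)) ^ (ν - 1)) ^ (1/q) = (n:ℝ) ^ (((ν:ℝ) - 1) / q) := by
    rw [← Real.rpow_natCast ((n:ℝ)) (ν - 1), ← Real.rpow_mul (Nat.cast_nonneg n)]
    congr 1
    rw [Nat.cast_sub hν]
    push_cast
    ring
  rw [e1, e2]
end
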